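/- arXiv:0707.0837 — 10 statements merged into one kernel-verified Lean document; each statement's English description precedes it below -/
import Mathlib

section
/- Let N be a positive integer, let δ ∈ (0,1), set θ = 9/(8 ln(2/δ)), and for k = 0,1,...,N define ℒ(k) = k/N + (3/4)·(1 − 2k/N − √(1 + 4θk(1 − k/N)))/(1 + θN) and 𝒰(k) = k/N + (3/4)·(1 − 2k/N + √(1 + 4θk(1 − k/N)))/(1 + θN). Then for every p ∈ (0,1), the probability that a Binomial(N,p) random variable K satisfies ℒ(K) < p < 𝒰(K) exceeds 1 − δ; that is, ∑_{k=0}^{N} [ℒ(k) < p and p < 𝒰(k)] · C(N,k) p^k (1−p)^(N−k) > 1 − δ. -/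
noncomputable def klBin (x p : ℝ) : ℝ :=
  x * (Real.log x - Real.log p) + (1 - x) * (Real.log (1 - x) - Real.log (1 - p))

lemma klg_hasDeriv (x : ℝ) (hx0 : 0 < x) (hx1 : x < 1) (y : ℝ) (hy0 : 0 < y) (hyx : y ≤ x) :
    HasDerivAt (fun y : ℝ => klBin x y - (x - y)^2 / (2 * ((x + 2*y)/3) * (1 - (x + 2*y)/3)))
      ((-(x - y) * (((x + 2*y)/3 - y)^2 * ((1 - (x + 2*y)/3)^2 - y*(1 - 2*((x + 2*y)/3)))))
        / (y * (1 - y) * (((x + 2*y)/3)^2 * (1 - (x + 2*y)/3)^2))) y := by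
  simp only [klBin]
  have hy1 : y < 1 := lt_of_le_of_lt hyx hx1
  have hm0 : 0 < (x + 2*y)/3 := by positivity
  have hm1 : (x + 2*y)/3 < 1 := by linarith
  have hyne : y ≠ 0 := hy0.ne'
  have h1y : (1:ℝ) - y ≠ 0 := by intro h; linarith
  have hmne : (x + 2*y)/3 ≠ 0 := hm0.ne'
  have hm1ne : 1 - (x + 2*y)/3 ≠ 0 := by intro h; linarith
  have h1 : HasDerivAt (fun y : ℝ => x * (Real.log x - Real.log y)) (x * -y⁻¹) y :=
    ((Real.hasDerivAt_log hy0.ne').const_sub (Real.log x)).const_mul x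
  have h2 : HasDerivAt (fun y : ℝ => (1 - x) * (Real.log (1 - x) - Real.log (1 - y)))
      ((1 - x) * -((1 - y)⁻¹ * -1)) y := by
    have hinner : HasDerivAt (fun y : ℝ => 1 - y) (-1) y := (hasDerivAt_id y).const_sub 1
    have hlog : HasDerivAt (fun y : ℝ => Real.log (1 - y)) ((1 - y)⁻¹ * (-1)) y :=
      (Real.hasDerivAt_log h1y).comp y hinner
    exact (hlog.const_sub (Real.log (1 - x))).const_mul (1 - x)
  have hT : HasDerivAt (fun y : ℝ => x * (Real.log x - Real.log y)
      + (1 - x) * (Real.log (1 - x) - Real.log (1 - y))) ((-(x - y)) / (y * (1 - y))) y := by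
    refine (h1.add h2).congr_deriv ?_
    symm
    field_simp
    ring
  have hu : HasDerivAt (fun y : ℝ => (x - y)^2) (2 * (x - y) ^ 1 * (-1)) y :=
    ((hasDerivAt_id y).const_sub x).pow 2
  have hw : HasDerivAt (fun y : ℝ => (x + 2*y)/3) (2 * 1 / 3) y :=
    (((hasDerivAt_id y).const_mul 2).const_add x).div_const 3
  have hv : HasDerivAt (fun y : ℝ => 2 * ((x + 2*y)/3) * (1 - (x + 2*y)/3))
      ((2 * (2 * 1 / 3)) * (1 - (x + 2*y)/3) + (2 * ((x + 2*y)/3)) * -(2 * 1 / 3)) y :=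
    (hw.const_mul 2).mul (hw.const_sub 1)
  have hvne : 2 * ((x + 2*y)/3) * (1 - (x + 2*y)/3) ≠ 0 := by
    intro h; rcases mul_eq_zero.1 h with h' | h'
    · rcases mul_eq_zero.1 h' with h'' | h''
      · norm_num at h''
      · exact hmne h''
    · exact hm1ne h'
  have hr := hu.div hv hvne
  have hR : HasDerivAt (fun y : ℝ => (x - y)^2 / (2 * ((x + 2*y)/3) * (1 - (x + 2*y)/3)))
      ((-(x - y) * ((x + 2*y)/3 * (1 - (x + 2*y)/3) + ((x + 2*y)/3 - y) * (1 - 2*((x + 2*y)/3))))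
        / (((x + 2*y)/3)^2 * (1 - (x + 2*y)/3)^2)) y := by
    refine hr.congr_deriv ?_
    symm
    have hd2 : ((x + 2*y)/3)^2 * (1 - (x + 2*y)/3)^2 ≠ 0 :=
      mul_ne_zero (pow_ne_zero 2 hmne) (pow_ne_zero 2 hm1ne)
    rw [div_eq_div_iff hd2 (pow_ne_zero 2 hvne)]
    ring
  have htot := hT.sub hR
  refine htot.congr_deriv ?_
  symm
  have hd1 : y * (1 - y) ≠ 0 := mul_ne_zero hyne h1y
  have hd2 : ((x + 2*y)/3)^2 * (1 - (x + 2*y)/3)^2 ≠ 0 :=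
    mul_ne_zero (pow_ne_zero 2 hmne) (pow_ne_zero 2 hm1ne)
  rw [div_sub_div _ _ hd1 hd2, div_eq_div_iff (mul_ne_zero hd1 hd2) (mul_ne_zero hd1 hd2)]
  ring

lemma neg_log_lower (p : ℝ) (hp : 0 < p) (hp1 : p < 1) :
    9 * (1 - p) / (4 * (1 + 2 * p)) < -Real.log p := by
  set F : ℝ → ℝ := fun y => -Real.log y - 9 * (1 - y) / (4 * (1 + 2 * y)) with hF
  have hder : ∀ y : ℝ, 0 < y →
      HasDerivAt F (-((4 * (16 * y^2 - 11 * y + 4)) / (y * (4 * (1 + 2 * y))^2))) y := by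
    intro y hy
    have hvne : 4 * (1 + 2 * y) ≠ 0 := ne_of_gt (by linarith)
    have hu : HasDerivAt (fun y : ℝ => 9 * (1 - y)) (9 * (-1)) y :=
      ((hasDerivAt_id y).const_sub 1).const_mul 9
    have hv : HasDerivAt (fun y : ℝ => 4 * (1 + 2 * y)) (4 * (2 * 1)) y :=
      (((hasDerivAt_id y).const_mul 2).const_add 1).const_mul 4
    have hlog : HasDerivAt (fun y : ℝ => -Real.log y) (-y⁻¹) y := (Real.hasDerivAt_log hy.ne').neg
    have := hlog.sub (hu.div hv hvne)
    refine this.congr_deriv ?_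
    symm
    field_simp
    ring
  have hanti : StrictAntiOn F (Set.Icc p 1) := by
    apply strictAntiOn_of_deriv_neg (convex_Icc p 1)
    · intro y hy
      exact (hder y (lt_of_lt_of_le hp hy.1)).continuousAt.continuousWithinAt
    · intro y hy
      rw [interior_Icc] at hy
      have h0y : 0 < y := lt_trans hp hy.1
      rw [(hder y h0y).deriv]
      have hnum : 0 < 4 * (16 * y^2 - 11 * y + 4) := by nlinarith [sq_nonneg (32 * y - 11)]
      have hden : 0 < y * (4 * (1 + 2 * y))^2 := mul_pos h0y (pow_pos (by linarith) 2)
      have := div_pos hnum hden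
      linarith
  have h := hanti (Set.mem_Icc.2 ⟨le_refl p, hp1.le⟩) (Set.mem_Icc.2 ⟨hp1.le, le_refl 1⟩) hp1
  have hF1 : F 1 = 0 := by simp [hF]
  have hFp : F p = -Real.log p - 9 * (1 - p) / (4 * (1 + 2 * p)) := rfl
  rw [hF1, hFp] at h
  linarith

lemma kl_lower (p x : ℝ) (hp : 0 < p) (hpx : p < x) (hx : x ≤ 1) :
    (x - p)^2 / (2 * ((x + 2*p)/3) * (1 - (x + 2*p)/3)) < klBin x p := by
  have h0x : 0 < x := lt_trans hp hpx
  have hp1 : p < 1 := lt_of_lt_of_le hpx hx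
  rcases eq_or_lt_of_le hx with heq | hx1
  · subst heq
    have hkl : klBin 1 p = -Real.log p := by simp [klBin]
    rw [hkl]
    have hratio : (1 - p)^2 / (2 * ((1 + 2*p)/3) * (1 - (1 + 2*p)/3))
        = 9 * (1 - p) / (4 * (1 + 2 * p)) := by
      have h1p : (2:ℝ) * ((1 + 2*p)/3) * (1 - (1 + 2*p)/3) ≠ 0 := by
        have : (0:ℝ) < 2 * ((1 + 2*p)/3) * (1 - (1 + 2*p)/3) := by nlinarith
        exact ne_of_gt this
      have h12p : (4:ℝ) * (1 + 2 * p) ≠ 0 := ne_of_gt (by linarith)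
      rw [div_eq_div_iff h1p h12p]
      ring
    rw [hratio]
    exact neg_log_lower p hp hp1
  · set g : ℝ → ℝ := fun y =>
      klBin x y - (x - y)^2 / (2 * ((x + 2*y)/3) * (1 - (x + 2*y)/3)) with hg
    have hanti : StrictAntiOn g (Set.Icc p x) := by
      apply strictAntiOn_of_deriv_neg (convex_Icc p x)
      · intro y hy
        exact (klg_hasDeriv x h0x hx1 y (lt_of_lt_of_le hp hy.1) hy.2).continuousAt.continuousWithinAt
      · intro y hy
        rw [interior_Icc] at hy
        have h0y : 0 < y := lt_trans hp hy.1
        have hyx : y < x := hy.2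
        have hy1 : y < 1 := lt_trans hyx hx1
        rw [(klg_hasDeriv x h0x hx1 y h0y hyx.le).deriv]
        have hm0 : 0 < (x + 2*y)/3 := by linarith
        have hm1 : (x + 2*y)/3 < 1 := by linarith
        have hmy : 0 < (x + 2*y)/3 - y := by linarith
        have hfac : 0 < (1 - (x + 2*y)/3)^2 - y * (1 - 2*((x + 2*y)/3)) := by
          nlinarith [sq_nonneg (2 * ((x + 2*y)/3) - 1), sq_nonneg ((x + 2*y)/3 - y)]
        apply div_neg_of_neg_of_pos
        · have h1 : 0 < ((x + 2*y)/3 - y)^2 * ((1 - (x + 2*y)/3)^2 - y*(1 - 2*((x + 2*y)/3))) :=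
            mul_pos (pow_pos hmy 2) hfac
          nlinarith
        · exact mul_pos (mul_pos h0y (by linarith))
            (mul_pos (pow_pos hm0 2) (pow_pos (by linarith) 2))
    have h := hanti (Set.mem_Icc.2 ⟨le_refl p, hpx.le⟩) (Set.mem_Icc.2 ⟨hpx.le, le_refl x⟩) hpx
    have hgx : g x = 0 := by
      simp [hg, klBin]
    rw [hgx] at h
    have h2 : 0 < klBin x p - (x - p)^2 / (2 * ((x + 2*p)/3) * (1 - (x + 2*p)/3)) := h
    linarith

lemma binom_expand (u v : ℝ) (N : ℕ) :
    ∑ k ∈ Finset.range (N+1), (N.choose k : ℝ) * u^k * v^(N-k) = (u+v)^N := by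
  rw [add_pow]
  apply Finset.sum_congr rfl
  intro k hk
  ring

lemma chernoff (N : ℕ) (p x : ℝ) (hp : 0 < p) (hp1 : p < 1) (hpx : p < x) (hx : x < 1) :
    ∑ k ∈ Finset.range (N+1),
      (if (N:ℝ)*x ≤ (k:ℝ) then (N.choose k : ℝ) * p^k * (1-p)^(N-k) else 0)
      ≤ Real.exp (-(N:ℝ) * klBin x p) := by
  have h0x : 0 < x := lt_trans hp hpx
  have h1x : 0 < 1 - x := by linarith
  have hq : 0 < 1 - p := by linarith
  set r : ℝ := x * (1-p) / (p * (1-x)) with hr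
  have hr0 : 0 < r := by positivity
  have hr1 : 1 < r := by
    rw [hr, lt_div_iff₀ (by positivity)]
    nlinarith
  have step1 : ∑ k ∈ Finset.range (N+1),
      (if (N:ℝ)*x ≤ (k:ℝ) then (N.choose k : ℝ) * p^k * (1-p)^(N-k) else 0)
      ≤ ∑ k ∈ Finset.range (N+1),
      ((N.choose k : ℝ) * p^k * (1-p)^(N-k)) * r ^ ((k:ℝ) - (N:ℝ)*x) := by
    apply Finset.sum_le_sum
    intro k hk
    by_cases hcond : (N:ℝ)*x ≤ (k:ℝ)
    · rw [if_pos hcond]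
      have h1 : (1:ℝ) ≤ r ^ ((k:ℝ) - (N:ℝ)*x) :=
        Real.one_le_rpow hr1.le (by linarith)
      have h2 : (0:ℝ) ≤ (N.choose k : ℝ) * p^k * (1-p)^(N-k) := by positivity
      nlinarith
    · rw [if_neg hcond]
      positivity
  have step2 : ∑ k ∈ Finset.range (N+1),
      ((N.choose k : ℝ) * p^k * (1-p)^(N-k)) * r ^ ((k:ℝ) - (N:ℝ)*x)
      = ((1-p)/(1-x))^N / r ^ ((N:ℝ)*x) := by
    have : ∀ k ∈ Finset.range (N+1),
        ((N.choose k : ℝ) * p^k * (1-p)^(N-k)) * r ^ ((k:ℝ) - (N:ℝ)*x)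
        = ((N.choose k : ℝ) * (p*r)^k * (1-p)^(N-k)) / r ^ ((N:ℝ)*x) := by
      intro k hk
      rw [Real.rpow_sub hr0, Real.rpow_natCast]
      rw [mul_pow]
      field_simp
    rw [Finset.sum_congr rfl this, ← Finset.sum_div, binom_expand]
    congr 2
    rw [hr]
    field_simp
    ring
  have step3 : ((1-p)/(1-x))^N / r ^ ((N:ℝ)*x) = Real.exp (-(N:ℝ) * klBin x p) := by
    have hq1x : 0 < (1-p)/(1-x) := by positivity
    rw [Real.rpow_def_of_pos hr0, ← Real.exp_log (pow_pos hq1x N), Real.log_pow,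
      ← Real.exp_sub]
    congr 1
    rw [Real.log_div hq.ne' h1x.ne', hr,
      Real.log_div (by positivity : x * (1-p) ≠ 0) (by positivity : p * (1-x) ≠ 0),
      Real.log_mul h0x.ne' hq.ne', Real.log_mul hp.ne' h1x.ne']
    simp only [klBin]
    ring
  calc _ ≤ _ := step1
    _ = _ := step2
    _ = _ := step3

lemma tail_lt (N : ℕ) (hN : 0 < N) (p t a : ℝ) (hp : 0 < p) (hp1 : p < 1)
    (ha : 0 < a) (ht : 0 < t)
    (heq : (N:ℝ) * t^2 = 2 * a * ((p + t/3) * (1 - (p + t/3)))) :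
    ∑ k ∈ Finset.range (N+1),
      (if (N:ℝ)*(p+t) ≤ (k:ℝ) then (N.choose k : ℝ) * p^k * (1-p)^(N-k) else 0)
      < Real.exp (-a) := by
  have hNr : (0:ℝ) < N := Nat.cast_pos.2 hN
  have hμ1 : p + t/3 < 1 := by
    by_contra hcon
    push_neg at hcon
    have h1 : (0:ℝ) < (N:ℝ) * t^2 := by positivity
    have h2 : (p + t/3) * (1 - (p + t/3)) ≤ 0 :=
      mul_nonpos_of_nonneg_of_nonpos (by linarith) (by linarith)
    nlinarith [mul_nonpos_of_nonneg_of_nonpos ha.le h2]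
  have hμ0 : 0 < p + t/3 := by linarith
  have hkey : ∀ hle : p + t ≤ 1, a < (N:ℝ) * klBin (p+t) p := by
    intro hle
    have hkl := kl_lower p (p+t) hp (by linarith) hle
    have hd : 0 < 2 * ((p + t + 2*p)/3) * (1 - (p + t + 2*p)/3) := by nlinarith
    have ha' : a = (N:ℝ) * ((p + t - p)^2 / (2 * ((p + t + 2*p)/3) * (1 - (p + t + 2*p)/3))) := by
      rw [mul_div_assoc']
      rw [eq_div_iff hd.ne']
      linear_combination -heq
    rw [ha']
    exact mul_lt_mul_of_pos_left hkl hNr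
  rcases lt_trichotomy (p+t) 1 with hlt | heq1 | hgt
  · calc ∑ k ∈ Finset.range (N+1),
        (if (N:ℝ)*(p+t) ≤ (k:ℝ) then (N.choose k : ℝ) * p^k * (1-p)^(N-k) else 0)
        ≤ Real.exp (-(N:ℝ) * klBin (p+t) p) := chernoff N p (p+t) hp hp1 (by linarith) hlt
      _ < Real.exp (-a) := by
          apply Real.exp_lt_exp.2
          have := hkey hlt.le
          nlinarith
  · have hsum : ∑ k ∈ Finset.range (N+1),
        (if (N:ℝ)*(p+t) ≤ (k:ℝ) then (N.choose k : ℝ) * p^k * (1-p)^(N-k) else 0)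
        = p^N := by
      rw [Finset.sum_eq_single_of_mem N (Finset.self_mem_range_succ N)]
      · rw [heq1, if_pos (by norm_num)]
        simp
      · intro k hk hkne
        have hkN : k < N := lt_of_le_of_ne (Nat.lt_succ_iff.1 (Finset.mem_range.1 hk)) hkne
        rw [heq1, if_neg]
        push_neg
        rw [mul_one]
        exact_mod_cast hkN
    rw [hsum]
    have hklv : klBin (p+t) p = -Real.log p := by rw [heq1]; simp [klBin]
    have := hkey heq1.le
    rw [hklv] at this
    have hpN : p^N = Real.exp ((N:ℝ) * Real.log p) := by
      rw [← Real.log_pow, Real.exp_log (pow_pos hp N)]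
    rw [hpN]
    apply Real.exp_lt_exp.2
    nlinarith
  · have hsum : ∑ k ∈ Finset.range (N+1),
        (if (N:ℝ)*(p+t) ≤ (k:ℝ) then (N.choose k : ℝ) * p^k * (1-p)^(N-k) else 0)
        = 0 := by
      apply Finset.sum_eq_zero
      intro k hk
      rw [if_neg]
      push_neg
      have hkN : (k:ℝ) ≤ N := by
        exact_mod_cast Nat.lt_succ_iff.1 (Finset.mem_range.1 hk)
      nlinarith
    rw [hsum]
    positivity


lemma cond_of_Q (w p xk sk : ℝ) (hw : 0 < 1 + w) (hsk2 : sk^2 = 1 + 4*w*xk*(1-xk))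
    (hsk0 : 0 < sk)
    (hQ : (4*w+1)*(p-xk)^2 + 3*(1-2*p)*(p-xk) - 9*p*(1-p) < 0) :
    3/4*((1-2*xk - sk)/(1+w)) < p - xk ∧ p - xk < 3/4*((1-2*xk + sk)/(1+w)) := by
  have hexpand : ((1+w)*(p-xk) - 3/4*(1-2*xk))^2 - (3/4*sk)^2
      = (1+w)/4 * ((4*w+1)*(p-xk)^2 + 3*(1-2*p)*(p-xk) - 9*p*(1-p)) := by
    linear_combination (-(9:ℝ)/16)*hsk2
  have hkey : ((1+w)*(p-xk) - 3/4*(1-2*xk))^2 < (3/4*sk)^2 := by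
    nlinarith [mul_neg_of_pos_of_neg (by positivity : (0:ℝ) < (1+w)/4) hQ]
  have h34 : (0:ℝ) < 3/4*sk := by positivity
  have hz1 : (1+w)*(p-xk) - 3/4*(1-2*xk) < 3/4*sk := by nlinarith [hkey]
  have hz2 : -(3/4*sk) < (1+w)*(p-xk) - 3/4*(1-2*xk) := by nlinarith [hkey]
  constructor
  · rw [mul_div_assoc', div_lt_iff₀ hw]
    linarith only [hz2]
  · rw [mul_div_assoc', lt_div_iff₀ hw]
    linarith only [hz1]

set_option maxHeartbeats 1000000 in
/-- Theorem 1 (rigorous formula): the confidence interval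
`(ℒ(K), 𝒰(K))` with `θ = 9/(8 ln(2/δ))` has coverage probability
exceeding `1 - δ` for every `p ∈ (0,1)`. -/
theorem binomial_confidence_interval_coverage
    (N : ℕ) (hN : 0 < N) (δ : ℝ) (hδ : δ ∈ Set.Ioo (0:ℝ) 1)
    (θ : ℝ) (hθ : θ = 9 / (8 * Real.log (2 / δ)))
    (L U : ℕ → ℝ)
    (hL : ∀ k ≤ N, L k = (k : ℝ) / N +
      3 / 4 * ((1 - 2 * k / N - Real.sqrt (1 + 4 * θ * k * (1 - (k : ℝ) / N))) / (1 + θ * N)))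
    (hU : ∀ k ≤ N, U k = (k : ℝ) / N +
      3 / 4 * ((1 - 2 * k / N + Real.sqrt (1 + 4 * θ * k * (1 - (k : ℝ) / N))) / (1 + θ * N)))
    (p : ℝ) (hp : p ∈ Set.Ioo (0:ℝ) 1) :
    1 - δ < ∑ k ∈ Finset.range (N + 1),
      (if L k < p ∧ p < U k then (N.choose k : ℝ) * p ^ k * (1 - p) ^ (N - k) else 0) := by
  obtain ⟨hδ0, hδ1⟩ := hδ
  obtain ⟨hp0, hp1⟩ := hp
  have h2δ : (0:ℝ) < 2/δ := by positivity
  have ha : 0 < Real.log (2/δ) := Real.log_pos (by rw [lt_div_iff₀ hδ0]; linarith)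
  set a := Real.log (2/δ) with hadef
  have hNr : (0:ℝ) < N := Nat.cast_pos.2 hN
  have hθ0 : 0 < θ := by rw [hθ]; positivity
  have hc'0 : (0:ℝ) < 4*θ*(N:ℝ)+1 := by positivity
  have hc'a : 2*a*(4*θ*(N:ℝ)+1) = 9*(N:ℝ) + 2*a := by
    rw [hθ]; field_simp; ring
  have hpq0 : (0:ℝ) < 36*(4*θ*(N:ℝ)+1)*p*(1-p) :=
    mul_pos (mul_pos (mul_pos (by norm_num) hc'0) hp0) (by linarith)
  have hD0 : (0:ℝ) ≤ (3*(1-2*p))^2 + 36*(4*θ*(N:ℝ)+1)*p*(1-p) := by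
    nlinarith [sq_nonneg (3*(1-2*p)), hpq0]
  set s := Real.sqrt ((3*(1-2*p))^2 + 36*(4*θ*(N:ℝ)+1)*p*(1-p)) with hsdef
  have hs2 : s^2 = (3*(1-2*p))^2 + 36*(4*θ*(N:ℝ)+1)*p*(1-p) := Real.sq_sqrt hD0
  have hsb : |3*(1-2*p)| < s := by
    rw [hsdef, ← Real.sqrt_sq_eq_abs]
    apply Real.sqrt_lt_sqrt (sq_nonneg _)
    linarith only [hpq0]
  obtain ⟨hsb1, hsb2⟩ := abs_lt.1 hsb
  set t₁ := (3*(1-2*p) + s)/(2*(4*θ*(N:ℝ)+1)) with ht1def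
  set t₂ := (-(3*(1-2*p)) + s)/(2*(4*θ*(N:ℝ)+1)) with ht2def
  have ht10 : 0 < t₁ := div_pos (by linarith) (by linarith)
  have ht20 : 0 < t₂ := div_pos (by linarith) (by linarith)
  have h2c : (2*(4*θ*(N:ℝ)+1)) ≠ 0 := by positivity
  have hm1 : t₁*(2*(4*θ*(N:ℝ)+1)) = 3*(1-2*p) + s := by
    rw [ht1def, div_mul_cancel₀ _ h2c]
  have hm2 : t₂*(2*(4*θ*(N:ℝ)+1)) = -(3*(1-2*p)) + s := by
    rw [ht2def, div_mul_cancel₀ _ h2c]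
  have root1exp : (4*(4*θ*(N:ℝ)+1))*((4*θ*(N:ℝ)+1) * t₁^2 - 3*(1-2*p)*t₁ - 9*p*(1-p)) = 0 := by
    linear_combination (2*(4*θ*(N:ℝ)+1)*t₁ - 3*(1-2*p) + s) * hm1 + hs2
  have root2exp : (4*(4*θ*(N:ℝ)+1))*((4*θ*(N:ℝ)+1) * t₂^2 + 3*(1-2*p)*t₂ - 9*p*(1-p)) = 0 := by
    linear_combination (2*(4*θ*(N:ℝ)+1)*t₂ + 3*(1-2*p) + s) * hm2 + hs2
  have h4c : (4*(4*θ*(N:ℝ)+1)) ≠ 0 := by positivity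
  have root1 : (4*θ*(N:ℝ)+1) * t₁^2 - 3*(1-2*p)*t₁ - 9*p*(1-p) = 0 :=
    (mul_eq_zero.1 root1exp).resolve_left h4c
  have root2 : (4*θ*(N:ℝ)+1) * t₂^2 + 3*(1-2*p)*t₂ - 9*p*(1-p) = 0 :=
    (mul_eq_zero.1 root2exp).resolve_left h4c
  have heq1 : (N:ℝ)*t₁^2 = 2*a*((p + t₁/3)*(1 - (p + t₁/3))) := by
    linear_combination (2*a/9)*root1 - (t₁^2/9)*hc'a
  have heq2 : (N:ℝ)*t₂^2 = 2*a*(((1-p) + t₂/3)*(1 - ((1-p) + t₂/3))) := by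
    linear_combination (2*a/9)*root2 - (t₂^2/9)*hc'a
  -- classification of failures
  have hclass : ∀ k ∈ Finset.range (N+1), ¬(L k < p ∧ p < U k) →
      ((N:ℝ)*(p+t₁) ≤ (k:ℝ) ∨ (k:ℝ) ≤ (N:ℝ)*(p - t₂)) := by
    intro k hk hnot
    by_contra hcon
    push_neg at hcon
    obtain ⟨h1, h2⟩ := hcon
    apply hnot
    have hkN : k ≤ N := Nat.lt_succ_iff.1 (Finset.mem_range.1 hk)
    have hkNr : (k:ℝ) ≤ (N:ℝ) := Nat.cast_le.2 hkN
    have hk0 : (0:ℝ) ≤ (k:ℝ) := Nat.cast_nonneg k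
    have hxk1 : (k:ℝ)/N ≤ 1 := by rw [div_le_one hNr]; exact hkNr
    have hxk0 : 0 ≤ (k:ℝ)/N := by positivity
    have hA1 : -t₁ < p - (k:ℝ)/N := by
      have h1' : (k:ℝ)/N < p + t₁ := by
        rw [div_lt_iff₀ hNr]
        linarith only [h1]
      linarith only [h1']
    have hA2 : p - (k:ℝ)/N < t₂ := by
      have h2' : p - t₂ < (k:ℝ)/N := by
        rw [lt_div_iff₀ hNr]
        linarith only [h2]
      linarith only [h2']
    have hdd : (4*θ*(N:ℝ)+1)*(t₁ - t₂) = 3*(1-2*p) := by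
      rw [ht1def, ht2def]
      field_simp
      ring
    have hpp : (t₁*(2*(4*θ*(N:ℝ)+1)))*(t₂*(2*(4*θ*(N:ℝ)+1)))
        = (3*(1-2*p) + s)*(-(3*(1-2*p)) + s) := by rw [hm1, hm2]
    have hprod : (4*θ*(N:ℝ)+1)*(t₁*t₂) = 9*p*(1-p) := by
      apply mul_right_cancel₀ h4c
      linear_combination hpp + hs2
    have hfact : (4*(θ*(N:ℝ))+1)*(p - (k:ℝ)/N)^2 + 3*(1-2*p)*(p - (k:ℝ)/N) - 9*p*(1-p)
        = (4*θ*(N:ℝ)+1)*((p - (k:ℝ)/N) - t₂)*((p - (k:ℝ)/N) + t₁) := by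
      linear_combination (-(p - (k:ℝ)/N))*hdd + hprod
    have hQ : (4*(θ*(N:ℝ))+1)*(p - (k:ℝ)/N)^2 + 3*(1-2*p)*(p - (k:ℝ)/N) - 9*p*(1-p) < 0 := by
      rw [hfact]
      apply mul_neg_of_neg_of_pos
      · apply mul_neg_of_pos_of_neg hc'0
        linarith only [hA2]
      · linarith only [hA1]
    -- translate to the interval bounds
    have hprodB : (0:ℝ) ≤ θ*((k:ℝ)*(1 - (k:ℝ)/N)) :=
      mul_nonneg hθ0.le (mul_nonneg hk0 (by linarith only [hxk1]))
    have hB0 : (0:ℝ) ≤ 1 + 4*θ*(k:ℝ)*(1 - (k:ℝ)/N) := by linarith only [hprodB]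
    have hBpos : (0:ℝ) < 1 + 4*θ*(k:ℝ)*(1 - (k:ℝ)/N) := by linarith only [hprodB]
    set sk := Real.sqrt (1 + 4*θ*(k:ℝ)*(1 - (k:ℝ)/N)) with hskdef
    have hsk2 : sk^2 = 1 + 4*θ*(k:ℝ)*(1 - (k:ℝ)/N) := Real.sq_sqrt hB0
    have hsk0 : 0 < sk := Real.sqrt_pos.2 hBpos
    have hc0 : (0:ℝ) < 1 + θ*(N:ℝ) := by positivity
    have hkNxk : (k:ℝ) = (N:ℝ)*((k:ℝ)/N) := by field_simp
    have hsk2' : sk^2 = 1 + 4*(θ*(N:ℝ))*((k:ℝ)/N)*(1-(k:ℝ)/N) := by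
      linear_combination hsk2 + 4*θ*(1-(k:ℝ)/N)*hkNxk
    have hcond := cond_of_Q (θ*(N:ℝ)) p ((k:ℝ)/N) sk hc0 hsk2' hsk0 hQ
    have h2k : (2:ℝ) * (k:ℝ) / N = 2*((k:ℝ)/N) := by ring
    constructor
    · rw [hL k hkN, ← hskdef, h2k]
      linarith only [hcond.1]
    · rw [hU k hkN, ← hskdef, h2k]
      linarith only [hcond.2]
  -- sum manipulation
  have htotal : ∑ k ∈ Finset.range (N+1), (N.choose k : ℝ) * p^k * (1-p)^(N-k) = 1 := by
    rw [binom_expand, show p + (1-p) = 1 by ring, one_pow]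
  have hsum_add : (∑ k ∈ Finset.range (N+1),
        (if L k < p ∧ p < U k then (N.choose k : ℝ) * p^k * (1-p)^(N-k) else 0))
      + (∑ k ∈ Finset.range (N+1),
        (if ¬(L k < p ∧ p < U k) then (N.choose k : ℝ) * p^k * (1-p)^(N-k) else 0)) = 1 := by
    rw [← Finset.sum_add_distrib]
    conv_rhs => rw [← htotal]
    apply Finset.sum_congr rfl
    intro k hk
    by_cases h : L k < p ∧ p < U k <;> simp [h]
  suffices hfail : ∑ k ∈ Finset.range (N+1),
      (if ¬(L k < p ∧ p < U k) then (N.choose k : ℝ) * p^k * (1-p)^(N-k) else 0) < δ by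
    linarith only [hsum_add, hfail]
  have hbound : ∑ k ∈ Finset.range (N+1),
      (if ¬(L k < p ∧ p < U k) then (N.choose k : ℝ) * p^k * (1-p)^(N-k) else 0)
      ≤ (∑ k ∈ Finset.range (N+1),
          (if (N:ℝ)*(p+t₁) ≤ (k:ℝ) then (N.choose k : ℝ) * p^k * (1-p)^(N-k) else 0))
        + (∑ k ∈ Finset.range (N+1),
          (if (k:ℝ) ≤ (N:ℝ)*(p-t₂) then (N.choose k : ℝ) * p^k * (1-p)^(N-k) else 0)) := by
    rw [← Finset.sum_add_distrib]
    apply Finset.sum_le_sum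
    intro k hk
    have hP0 : (0:ℝ) ≤ (N.choose k : ℝ) * p^k * (1-p)^(N-k) :=
      mul_nonneg (mul_nonneg (Nat.cast_nonneg _) (pow_nonneg hp0.le k))
        (pow_nonneg (by linarith : (0:ℝ) ≤ 1-p) (N-k))
    have hi1 : (0:ℝ) ≤ (if (N:ℝ)*(p+t₁) ≤ (k:ℝ) then (N.choose k : ℝ) * p^k * (1-p)^(N-k) else 0) := by
      split
      · exact hP0
      · exact le_rfl
    have hi2 : (0:ℝ) ≤ (if (k:ℝ) ≤ (N:ℝ)*(p-t₂) then (N.choose k : ℝ) * p^k * (1-p)^(N-k) else 0) := by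
      split
      · exact hP0
      · exact le_rfl
    by_cases h : ¬(L k < p ∧ p < U k)
    · rw [if_pos h]
      rcases hclass k hk h with h1 | h1
      · rw [if_pos h1]
        linarith only [hi2]
      · rw [if_pos h1]
        linarith only [hi1]
    · rw [if_neg h]
      linarith only [hi1, hi2]
  have hupper : ∑ k ∈ Finset.range (N+1),
      (if (N:ℝ)*(p+t₁) ≤ (k:ℝ) then (N.choose k : ℝ) * p^k * (1-p)^(N-k) else 0)
      < Real.exp (-a) := tail_lt N hN p t₁ a hp0 hp1 ha ht10 heq1
  have hreflect : ∑ k ∈ Finset.range (N+1),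
      (if (k:ℝ) ≤ (N:ℝ)*(p-t₂) then (N.choose k : ℝ) * p^k * (1-p)^(N-k) else 0)
      = ∑ k ∈ Finset.range (N+1),
      (if (N:ℝ)*((1-p)+t₂) ≤ (k:ℝ) then (N.choose k : ℝ) * (1-p)^k * (1-(1-p))^(N-k) else 0) := by
    rw [← Finset.sum_range_reflect]
    apply Finset.sum_congr rfl
    intro j hj
    have hjN : j ≤ N := Nat.lt_succ_iff.1 (Finset.mem_range.1 hj)
    have hNj : N + 1 - 1 - j = N - j := by omega
    rw [hNj]
    have hcast : ((N - j : ℕ) : ℝ) = (N:ℝ) - (j:ℝ) := by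
      rw [Nat.cast_sub hjN]
    have hiff : (((N - j : ℕ)):ℝ) ≤ (N:ℝ)*(p-t₂) ↔ (N:ℝ)*((1-p)+t₂) ≤ (j:ℝ) := by
      rw [hcast]
      constructor <;> intro hh
      · nlinarith [hh]
      · nlinarith [hh]
    rw [if_congr hiff rfl rfl]
    congr 1
    rw [Nat.choose_symm hjN, Nat.sub_sub_self hjN, sub_sub_cancel]
    ring
  have hlower : ∑ k ∈ Finset.range (N+1),
      (if (k:ℝ) ≤ (N:ℝ)*(p-t₂) then (N.choose k : ℝ) * p^k * (1-p)^(N-k) else 0)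
      < Real.exp (-a) := by
    rw [hreflect]
    exact tail_lt N hN (1-p) t₂ a (by linarith) (by linarith) ha ht20 heq2
  have hexp : Real.exp (-a) = δ/2 := by
    rw [Real.exp_neg, hadef, Real.exp_log h2δ, inv_div]
  rw [hexp] at hupper hlower
  linarith only [hbound, hupper, hlower]
end

section
/- Let N be a positive integer, δ ∈ (0,1), and let k be an integer with 0 < k < N. Set θ = 9/(8 ln(2/δ)) and 𝒰(k) = k/N + (3/4)·(1 − 2k/N + √(1 + 4θk(1 − k/N)))/(1 + θN). If p̄ ∈ (0,1) satisfies ∑_{j=0}^{k} C(N,j) p̄^j (1−p̄)^(N−j) = δ/2 (the Clopper–Pearson upper confidence limit), then p̄ < 𝒰(k). -/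
lemma cp_factor (t u v : ℝ) (ht : 0 ≤ t) (htu : t ≤ u) (hv : 0 ≤ v) :
    t * (v - u) ≤ 2 * (v - u) ^ 2 + 2 * (u * v) := by
  rcases le_total v u with h | h
  · nlinarith [mul_nonneg (le_trans ht htu) hv]
  · nlinarith [mul_nonneg (sub_nonneg.2 htu) (sub_nonneg.2 h), sq_nonneg u,
      mul_nonneg (le_trans ht htu) hv]

lemma cp_key_poly (a x : ℝ) (ha : 0 < a) (hax : a ≤ x) (hx1 : x < 1) :
    9 * x * (1 - x) * (2 * ((a + 2*x) * (3 - a - 2*x)) - (x - a) * (2 * (3 - a - 2*x) - 2 * (a + 2*x)))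
      ≤ 2 * ((a + 2*x) * (3 - a - 2*x))^2 := by
  have hfac := cp_factor (2/3*(x-a)) ((a+2*x)/3) (1-(a+2*x)/3)
    (by linarith) (by linarith) (by linarith)
  nlinarith [mul_nonneg (sq_nonneg (x - a)) (sub_nonneg.2 hfac)]

set_option maxHeartbeats 1000000 in
lemma cp_kl (a p : ℝ) (ha : 0 < a) (hap : a < p) (hp1 : p < 1) :
    9 * (p - a)^2 / (2 * ((a + 2*p) * (3 - a - 2*p)))
      ≤ a * (Real.log a - Real.log p) + (1 - a) * (Real.log (1 - a) - Real.log (1 - p)) := by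
  set g : ℝ → ℝ := fun x => a * (Real.log a - Real.log x)
      + (1 - a) * (Real.log (1 - a) - Real.log (1 - x))
      - 9 * (x - a)^2 / (2 * ((a + 2*x) * (3 - a - 2*x))) with hgdef
  have hg : ∀ x ∈ Set.Icc a p, HasDerivAt g
      ((x - a) / (x * (1 - x))
        - 9*(x-a)*(2*((a + 2*x) * (3 - a - 2*x)) - (x-a)*(2*(3 - a - 2*x) - 2*(a + 2*x)))
          / (2*((a + 2*x) * (3 - a - 2*x))^2)) x := by
    intro x hx
    obtain ⟨hx1, hx2⟩ := hx
    have hx0 : 0 < x := lt_of_lt_of_le ha hx1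
    have hxlt1 : x < 1 := lt_of_le_of_lt hx2 hp1
    have hx0' : x ≠ 0 := ne_of_gt hx0
    have h1x : (1:ℝ) - x ≠ 0 := by linarith
    have hP1 : 0 < a + 2*x := by linarith
    have hP2 : 0 < 3 - a - 2*x := by linarith
    have hPne : (a + 2*x) * (3 - a - 2*x) ≠ 0 := ne_of_gt (mul_pos hP1 hP2)
    have h1 : HasDerivAt (fun y : ℝ => a * (Real.log a - Real.log y)) (a * (0 - x⁻¹)) x :=
      ((hasDerivAt_const x (Real.log a)).sub (Real.hasDerivAt_log hx0')).const_mul a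
    have h2 : HasDerivAt (fun y : ℝ => (1 - a) * (Real.log (1 - a) - Real.log (1 - y)))
        ((1 - a) * (0 - (-1)/(1 - x))) x := by
      have hin : HasDerivAt (fun y : ℝ => 1 - y) (-1) x := by
        simpa using (hasDerivAt_id x).const_sub 1
      exact ((hasDerivAt_const x (Real.log (1 - a))).sub
        (hin.log h1x)).const_mul (1 - a)
    have hnum : HasDerivAt (fun y : ℝ => 9 * (y - a)^2) (9 * (2 * (x - a)^1 * 1)) x :=
      (((hasDerivAt_id x).sub_const a).pow 2).const_mul 9
    have hd1 : HasDerivAt (fun y : ℝ => a + 2*y) (2 * 1) x :=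
      ((hasDerivAt_id x).const_mul 2).const_add a
    have hd2 : HasDerivAt (fun y : ℝ => 3 - a - 2*y) (-(2 * 1)) x :=
      ((hasDerivAt_id x).const_mul 2).const_sub (3 - a)
    have hden : HasDerivAt (fun y : ℝ => 2 * ((a + 2*y) * (3 - a - 2*y)))
        (2 * ((2 * 1) * (3 - a - 2*x) + (a + 2*x) * (-(2 * 1)))) x :=
      (hd1.mul hd2).const_mul 2
    have hdenne : 2 * ((a + 2*x) * (3 - a - 2*x)) ≠ 0 := by positivity
    have hfrac := hnum.div hden hdenne
    have hh := (h1.add h2).sub hfrac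
    convert hh using 1
    case e'_4 => rfl
    case e'_5 => rfl
    case e'_8 => rfl
    have E1 : a * (0 - x⁻¹) + (1 - a) * (0 - (-1)/(1 - x)) = (x - a) / (x * (1 - x)) := by
      field_simp
      ring
    have E2 : (9 * (2 * (x - a) ^ 1 * 1) * (2 * ((a + 2 * x) * (3 - a - 2 * x))) -
          9 * (x - a) ^ 2 * (2 * (2 * 1 * (3 - a - 2 * x) + (a + 2 * x) * -(2 * 1)))) /
        (2 * ((a + 2 * x) * (3 - a - 2 * x))) ^ 2
        = 9*(x-a)*(2*((a + 2*x) * (3 - a - 2*x)) - (x-a)*(2*(3 - a - 2*x) - 2*(a + 2*x)))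
          / (2*((a + 2*x) * (3 - a - 2*x))^2) := by
      rw [div_eq_div_iff (by positivity) (by positivity)]
      ring
    rw [E1, E2]
  have hcont : ContinuousOn g (Set.Icc a p) := fun x hx =>
    (hg x hx).continuousAt.continuousWithinAt
  have hmono : MonotoneOn g (Set.Icc a p) := by
    apply monotoneOn_of_deriv_nonneg (convex_Icc a p) hcont
    · intro x hx
      rw [interior_Icc] at hx
      exact ((hg x ⟨hx.1.le, hx.2.le⟩).differentiableAt).differentiableWithinAt
    · intro x hx
      rw [interior_Icc] at hx
      obtain ⟨hx1, hx2⟩ := hx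
      rw [(hg x ⟨hx1.le, hx2.le⟩).deriv]
      have hx0 : 0 < x := lt_trans ha hx1
      have hxlt1 : x < 1 := lt_trans hx2 hp1
      have hP1 : 0 < a + 2*x := by linarith
      have hP2 : 0 < 3 - a - 2*x := by linarith
      have hPpos : 0 < (a + 2*x) * (3 - a - 2*x) := mul_pos hP1 hP2
      rw [sub_nonneg, div_le_div_iff₀ (by positivity) (mul_pos hx0 (by linarith : (0:ℝ) < 1 - x))]
      have hkey := cp_key_poly a x ha hx1.le hxlt1
      nlinarith [mul_nonneg (sub_nonneg.2 hx1.le) (sub_nonneg.2 hkey)]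
  have hga : g a = 0 := by simp [hgdef]
  have hfin := hmono (Set.left_mem_Icc.2 hap.le) (Set.right_mem_Icc.2 hap.le) hap.le
  rw [hga] at hfin
  have : 0 ≤ a * (Real.log a - Real.log p) + (1 - a) * (Real.log (1 - a) - Real.log (1 - p))
      - 9 * (p - a)^2 / (2 * ((a + 2*p) * (3 - a - 2*p))) := hfin
  linarith

lemma cp_chernoff (N k : ℕ) (hN : 0 < N) (hk0 : 0 < k) (hkN : k < N) (p : ℝ)
    (hp0 : 0 < p) (hp1 : p < 1) (hap : (k:ℝ)/N < p) :
    ∑ j ∈ Finset.range (k+1), (N.choose j : ℝ) * p ^ j * (1 - p) ^ (N - j)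
      < (p / ((k:ℝ)/N))^k * ((1-p)/(1 - (k:ℝ)/N))^(N-k) := by
  set a : ℝ := (k:ℝ)/N with hadef
  have hNpos : (0:ℝ) < N := Nat.cast_pos.2 hN
  have ha0 : 0 < a := div_pos (Nat.cast_pos.2 hk0) hNpos
  have ha1 : a < 1 := (div_lt_one hNpos).2 (Nat.cast_lt.2 hkN)
  have h1p : 0 < 1 - p := by linarith
  have h1a : 0 < 1 - a := by linarith
  set r : ℝ := a*(1-p)/(p*(1-a)) with hrdef
  have hr0 : 0 < r := by positivity
  have hr1 : r < 1 := by
    rw [hrdef, div_lt_one (by positivity)]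
    nlinarith
  have hmulr : p * r = a * (1-p) / (1-a) := by
    rw [hrdef]; field_simp
  have hsum1 : (∑ j ∈ Finset.range (k+1), (N.choose j:ℝ) * p ^ j * (1 - p) ^ (N - j)) * r^k
      ≤ ∑ j ∈ Finset.range (k+1), (N.choose j:ℝ) * p ^ j * (1 - p) ^ (N - j) * r^j := by
    rw [Finset.sum_mul]
    apply Finset.sum_le_sum
    intro j hj
    have hjk : j ≤ k := Nat.lt_succ_iff.1 (Finset.mem_range.1 hj)
    have hle : r^k ≤ r^j := pow_le_pow_of_le_one hr0.le hr1.le hjk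
    have hterm : (0:ℝ) ≤ (N.choose j:ℝ) * p ^ j * (1 - p) ^ (N - j) := by positivity
    exact mul_le_mul_of_nonneg_left hle hterm
  have hsum2 : (∑ j ∈ Finset.range (k+1), (N.choose j:ℝ) * p ^ j * (1 - p) ^ (N - j) * r^j)
      < ∑ j ∈ Finset.range (N+1), (N.choose j:ℝ) * p ^ j * (1 - p) ^ (N - j) * r^j := by
    apply Finset.sum_lt_sum_of_subset (Finset.range_subset_range.2 (by omega)) (i := N)
      (Finset.self_mem_range_succ N) (by simp [Finset.mem_range]; omega)
    · have : (N.choose N : ℝ) = 1 := by simp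
      rw [this]
      positivity
    · intro j _ _
      positivity
  have hsum3 : (∑ j ∈ Finset.range (N+1), (N.choose j:ℝ) * p ^ j * (1 - p) ^ (N - j) * r^j)
      = (p*r + (1-p))^N := by
    rw [add_pow]
    apply Finset.sum_congr rfl
    intro j _
    rw [mul_pow]
    ring
  have hpr : p*r + (1-p) = (1-p)/(1-a) := by
    rw [hmulr]; field_simp; ring
  have hlt : (∑ j ∈ Finset.range (k+1), (N.choose j:ℝ) * p ^ j * (1 - p) ^ (N - j)) * r^k
      < ((1-p)/(1-a))^N := by
    calc _ ≤ _ := hsum1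
    _ < _ := hsum2
    _ = (p*r + (1-p))^N := hsum3
    _ = ((1-p)/(1-a))^N := by rw [hpr]
  have hfact : ((1-p)/(1-a))^N = (p/a)^k * ((1-p)/(1-a))^(N-k) * r^k := by
    have h1 : ((1-p)/(1-a)) ^ N = ((1-p)/(1-a))^k * ((1-p)/(1-a))^(N-k) := by
      rw [← pow_add]; congr 1; omega
    have h2 : ((1-p)/(1-a))^k = (p/a)^k * r^k := by
      rw [← mul_pow]; congr 1; rw [hrdef]; field_simp
    rw [h1, h2]; ring
  rw [hfact] at hlt
  exact (mul_lt_mul_iff_of_pos_right (pow_pos hr0 k)).1 hlt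


set_option maxHeartbeats 1000000 in
/-- The Clopper–Pearson upper confidence limit is bounded above by `𝒰(k)`. -/
theorem clopper_pearson_upper_lt_U
    (N : ℕ) (hN : 0 < N) (δ : ℝ) (hδ : δ ∈ Set.Ioo (0:ℝ) 1)
    (k : ℕ) (hk0 : 0 < k) (hkN : k < N)
    (θ : ℝ) (hθ : θ = 9 / (8 * Real.log (2 / δ)))
    (U : ℝ)
    (hU : U = (k : ℝ) / N +
      3 / 4 * ((1 - 2 * k / N + Real.sqrt (1 + 4 * θ * k * (1 - (k : ℝ) / N))) / (1 + θ * N)))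
    (pbar : ℝ) (hpbar : pbar ∈ Set.Ioo (0:ℝ) 1)
    (hsum : ∑ j ∈ Finset.range (k + 1),
      (N.choose j : ℝ) * pbar ^ j * (1 - pbar) ^ (N - j) = δ / 2) :
    pbar < U := by
  obtain ⟨hδ0, hδ1⟩ := hδ
  obtain ⟨hp0, hp1⟩ := hpbar
  by_contra hcon
  push_neg at hcon
  have hL : 0 < Real.log (2/δ) := Real.log_pos (by rw [lt_div_iff₀ hδ0]; linarith)
  set L := Real.log (2/δ) with hLdef
  set a : ℝ := (k:ℝ)/N with hadef
  have hNpos : (0:ℝ) < N := Nat.cast_pos.2 hN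
  have hkpos : (0:ℝ) < k := Nat.cast_pos.2 hk0
  have ha0 : 0 < a := div_pos hkpos hNpos
  have ha1 : a < 1 := by rw [hadef, div_lt_one hNpos]; exact_mod_cast hkN
  have hθpos : 0 < θ := by rw [hθ]; positivity
  have h1θN : 0 < 1 + θ*(N:ℝ) := by positivity
  have hθ8 : 8*L*θ = 9 := by rw [hθ]; field_simp
  set s := Real.sqrt (1 + 4*θ*(k:ℝ)*(1-a)) with hsdef
  have harg : 0 ≤ 1 + 4*θ*(k:ℝ)*(1-a) := by
    nlinarith [mul_pos (mul_pos hθpos hkpos) (show (0:ℝ) < 1-a by linarith)]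
  have hs2 : s^2 = 1 + 4*θ*(k:ℝ)*(1-a) := Real.sq_sqrt harg
  have hs0 : 0 ≤ s := Real.sqrt_nonneg _
  clear_value L a s
  have habs : |1-2*a| < s := by
    rw [hsdef]
    rw [show |1-2*a| = |1-2*a| from rfl]
    apply (Real.lt_sqrt (abs_nonneg _)).2
    rw [sq_abs]
    nlinarith [mul_pos (mul_pos hθpos hkpos) (show (0:ℝ) < 1-a by linarith)]
  have h2k : 2*(k:ℝ)/(N:ℝ) = 2*a := by rw [hadef]; ring
  rw [h2k] at hU
  have hnum : 0 < 1-2*a+s := by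
    have := neg_abs_le (1-2*a)
    linarith
  have hUa : 0 < U - a := by
    rw [hU]
    have h3 : 0 < 3/4*((1-2*a+s)/(1+θ*(N:ℝ))) :=
      mul_pos (by norm_num) (div_pos hnum h1θN)
    linarith
  have hap : a < pbar := by linarith
  have hsval : s = 4/3*(U - a)*(1+θ*(N:ℝ)) - (1-2*a) := by
    rw [hU]
    field_simp
    ring
  have hk' : (k:ℝ) = a*(N:ℝ) := by rw [hadef]; field_simp
  have hE : (4/3*(U - a)*(1+θ*(N:ℝ)) - (1-2*a))^2 = 1 + 4*θ*(a*(N:ℝ))*(1-a) := by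
    rw [← hsval, hs2, hk']
  have hE2 : (16/9)*(U-a)^2*(1+θ*(N:ℝ)) - (8/3)*(U-a)*(1-2*a) = 4*a*(1-a) := by
    apply mul_left_cancel₀ (ne_of_gt h1θN)
    linear_combination hE
  have hquad : (9*(N:ℝ)+8*L)*(U-a)^2 = 12*L*(1-2*a)*(U-a) + 18*L*(a*(1-a)) := by
    linear_combination (9*L/2)*hE2 - (N:ℝ)*(U-a)^2*hθ8
  have hA : 0 ≤ (9*(N:ℝ)+8*L)*((pbar-a)*(U-a)) + 18*L*(a*(1-a)) := by
    have h1 : 0 ≤ (pbar-a)*(U-a) := mul_nonneg (by linarith) hUa.le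
    have h2 : 0 ≤ a*(1-a) := mul_nonneg ha0.le (by linarith)
    have h3 : 0 ≤ 9*(N:ℝ)+8*L := by linarith
    nlinarith
  have heq : 9*(N:ℝ)*(pbar-a)^2*(U-a) - 2*L*((a+2*pbar)*(3-a-2*pbar))*(U-a)
      = (pbar-U)*((9*(N:ℝ)+8*L)*((pbar-a)*(U-a)) + 18*L*(a*(1-a))) := by
    linear_combination (pbar - a)*hquad
  have hprod : 0 ≤ 9*(N:ℝ)*(pbar-a)^2*(U-a) - 2*L*((a+2*pbar)*(3-a-2*pbar))*(U-a) := by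
    rw [heq]
    exact mul_nonneg (by linarith) hA
  have hFt : 2*L*((a+2*pbar)*(3-a-2*pbar)) ≤ 9*(N:ℝ)*(pbar-a)^2 := by
    nlinarith [hprod, hUa]
  have hKL := cp_kl a pbar ha0 hap hp1
  have hap' : (k:ℝ)/(N:ℝ) < pbar := by rw [← hadef]; exact hap
  have hCh := cp_chernoff N k hN hk0 hkN pbar hp0 hp1 hap'
  rw [← hadef] at hCh
  have hPpos : 0 < (a+2*pbar)*(3-a-2*pbar) := mul_pos (by linarith) (by linarith)
  have hLN : L ≤ (N:ℝ) * (a * (Real.log a - Real.log pbar)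
      + (1 - a) * (Real.log (1 - a) - Real.log (1 - pbar))) := by
    have h3 : L ≤ (N:ℝ) * (9*(pbar-a)^2/(2*((a+2*pbar)*(3-a-2*pbar)))) := by
      rw [mul_div_assoc']
      rw [le_div_iff₀ (by positivity)]
      nlinarith [hFt]
    have h4 := mul_le_mul_of_nonneg_left hKL (le_of_lt hNpos)
    linarith
  have hXpos : 0 < (pbar/a)^k * ((1-pbar)/(1-a))^(N-k) :=
    mul_pos (pow_pos (div_pos hp0 ha0) k)
      (pow_pos (div_pos (by linarith) (by linarith)) (N-k))
  have hX : (pbar/a)^k * ((1-pbar)/(1-a))^(N-k) ≤ δ/2 := by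
    rw [← Real.log_le_log_iff hXpos (by positivity)]
    rw [Real.log_mul (ne_of_gt (pow_pos (div_pos hp0 ha0) k))
      (ne_of_gt (pow_pos (div_pos (by linarith) (by linarith : (0:ℝ) < 1-a)) (N-k)))]
    rw [Real.log_pow, Real.log_pow, Real.log_div (ne_of_gt hp0) (ne_of_gt ha0),
      Real.log_div (by linarith : (1:ℝ)-pbar ≠ 0) (by linarith : (1:ℝ)-a ≠ 0)]
    have hlogδ : Real.log (δ/2) = -L := by
      rw [hLdef, Real.log_div (ne_of_gt hδ0) two_ne_zero,
        Real.log_div two_ne_zero (ne_of_gt hδ0)]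
      ring
    rw [hlogδ]
    have hNk : ((N-k:ℕ):ℝ) = (1-a)*(N:ℝ) := by rw [Nat.cast_sub hkN.le, hk']; ring
    rw [hNk, hk']
    linarith [hLN]
  linarith [hCh, hX, hsum]
end

section
/- Let N be a positive integer, δ ∈ (0,1), and let k be an integer with 0 < k ≤ N. Set θ = 9/(8 ln(2/δ)) and ℒ(k) = k/N + (3/4)·(1 − 2k/N − √(1 + 4θk(1 − k/N)))/(1 + θN). If p̲ ∈ (0,1) satisfies ∑_{j=0}^{k−1} C(N,j) p̲^j (1−p̲)^(N−j) = 1 − δ/2 (the Clopper–Pearson lower confidence limit), then ℒ(k) < p̲. -/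
-- kl lower bound, case a = 1
lemma cp_aux_kl_one (p : ℝ) (hp0 : 0 < p) (hp1 : p < 1) :
    9 * (1 - p) / (4 * (2 * p + 1)) < - Real.log p := by
  set f : ℝ → ℝ := fun x => - Real.log x - 9 * (1 - x) / (4 * (2 * x + 1)) with hf
  have key : StrictAntiOn f (Set.Icc p 1) := by
    apply strictAntiOn_of_deriv_neg (convex_Icc p 1)
    · apply ContinuousOn.sub
      · refine (Real.continuousOn_log.mono ?_).neg
        intro x hx
        exact ne_of_gt (lt_of_lt_of_le hp0 hx.1)
      · apply ContinuousOn.div (by fun_prop) (by fun_prop)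
        intro x hx
        nlinarith [hx.1, hp0]
    · intro x hx
      rw [interior_Icc] at hx
      obtain ⟨hx0, hx1⟩ := hx
      have hx0' : 0 < x := lt_trans hp0 hx0
      have hd : (0:ℝ) < 4 * (2 * x + 1) := by linarith
      have h1 : HasDerivAt f (-(1/x) - ((-9) * (4*(2*x+1)) - (9*(1-x))*8) / (4*(2*x+1))^2) x := by
        have hlog : HasDerivAt (fun y : ℝ => - Real.log y) (-(1/x)) x :=
          by exact (Real.hasDerivAt_log hx0'.ne').neg.congr_deriv (by rw [one_div])
        have hnum : HasDerivAt (fun y : ℝ => 9 * (1 - y)) (-9 : ℝ) x := by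
          simpa using ((hasDerivAt_id x).const_sub 1).const_mul 9
        have hden : HasDerivAt (fun y : ℝ => 4 * (2 * y + 1)) (8 : ℝ) x := by
          have := (((hasDerivAt_id x).const_mul 2).add_const 1).const_mul (4:ℝ)
          exact this.congr_deriv (by norm_num)
        exact hlog.sub (hnum.div hden hd.ne')
      rw [h1.deriv]
      have heq : -(1/x) - ((-9) * (4*(2*x+1)) - (9*(1-x))*8) / (4*(2*x+1))^2
          = (-(16*x^2 - 11*x + 4)) / (x * (4 * (2*x+1)^2)) := by
        field_simp
        ring
      rw [heq]
      apply div_neg_of_neg_of_pos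
      · nlinarith [sq_nonneg (x - 11/32)]
      · positivity
  have h := key (Set.left_mem_Icc.2 hp1.le) (Set.right_mem_Icc.2 hp1.le) hp1
  simp only [hf, Real.log_one] at h
  have : (9:ℝ) * (1 - 1) / (4 * (2 * 1 + 1)) = 0 := by norm_num
  nlinarith [h]

lemma cp_aux_kl (a p : ℝ) (hp0 : 0 < p) (hpa : p < a) (ha1 : a ≤ 1) :
    9 * (a - p)^2 / (2 * (2*p + a) * (3 - 2*p - a)) <
      a * (Real.log a - Real.log p) + (1 - a) * (Real.log (1 - a) - Real.log (1 - p)) := by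
  rcases ha1.lt_or_eq with ha1' | rfl
  swap
  · have hlhs : 9 * (1 - p)^2 / (2 * (2*p + 1) * (3 - 2*p - 1)) = 9 * (1 - p) / (4 * (2 * p + 1)) := by
      rw [div_eq_div_iff (by nlinarith) (by nlinarith)]
      ring
    simpa [hlhs] using cp_aux_kl_one p hp0 hpa
  -- main case a < 1
  set φ : ℝ → ℝ := fun x => a * (Real.log a - Real.log x)
      + (1 - a) * (Real.log (1 - a) - Real.log (1 - x))
      - 9 * (a - x)^2 / (2 * (2*x + a) * (3 - 2*x - a)) with hφ
  have ha0 : 0 < a := lt_trans hp0 hpa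
  have key : StrictAntiOn φ (Set.Icc p a) := by
    apply strictAntiOn_of_deriv_neg (convex_Icc p a)
    · apply ContinuousOn.sub
      · apply ContinuousOn.add
        · refine continuousOn_const.mul (continuousOn_const.sub (Real.continuousOn_log.mono ?_))
          intro x hx
          exact ne_of_gt (lt_of_lt_of_le hp0 hx.1)
        · refine continuousOn_const.mul (continuousOn_const.sub
            (Real.continuousOn_log.comp (by fun_prop) ?_))
          intro x hx
          have h2 : x ≤ a := hx.2
          simp only [Set.mem_compl_iff, Set.mem_singleton_iff]
          intro h
          nlinarith
      · apply ContinuousOn.div (by fun_prop) (by fun_prop)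
        intro x hx
        have h1 := hx.1; have h2 := hx.2
        nlinarith
    · intro x hx
      rw [interior_Icc] at hx
      obtain ⟨hx0, hx1⟩ := hx
      have hx0' : 0 < x := lt_trans hp0 hx0
      have hx1' : x < 1 := lt_of_lt_of_le hx1 ha1'.le
      have hu : (0:ℝ) < 2*x + a := by linarith
      have hv : (0:ℝ) < 3 - 2*x - a := by linarith
      have hden : (0:ℝ) < 2 * (2*x + a) * (3 - 2*x - a) := by positivity
      have h1x : (0:ℝ) < 1 - x := by linarith
      have h1 : HasDerivAt φ
          (-((a-x)^3 * (x*(2*x+a)^2 + (1-x)*(3-2*x-a)^2)) / (x*(1-x)*((2*x+a)^2*(3-2*x-a)^2))) x := by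
        have t1 : HasDerivAt (fun y : ℝ => a * (Real.log a - Real.log y)) (a * -x⁻¹) x :=
          ((Real.hasDerivAt_log hx0'.ne').const_sub (Real.log a)).const_mul a
        have tin : HasDerivAt (fun y : ℝ => 1 - y) (-1 : ℝ) x := by
          simpa using (hasDerivAt_id x).const_sub 1
        have t2' : HasDerivAt (fun y : ℝ => Real.log (1 - y)) ((1-x)⁻¹ * (-1)) x :=
          (Real.hasDerivAt_log h1x.ne').comp x tin
        have t2 : HasDerivAt (fun y : ℝ => (1-a) * (Real.log (1-a) - Real.log (1 - y)))
            ((1-a) * -((1-x)⁻¹ * (-1))) x :=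
          (t2'.const_sub (Real.log (1-a))).const_mul (1-a)
        have tn : HasDerivAt (fun y : ℝ => 9 * (a - y)^2) (9 * ((2:ℕ) * (a-x)^(2-1) * (-1))) x := by
          exact (((hasDerivAt_id x).const_sub a).pow 2).const_mul 9
        have td1 : HasDerivAt (fun y : ℝ => 2 * (2*y + a)) (2 * 2 : ℝ) x := by
          simpa using (((hasDerivAt_id x).const_mul 2).add_const a).const_mul 2
        have td2 : HasDerivAt (fun y : ℝ => 3 - 2*y - a) (-2 : ℝ) x := by
          simpa using (((hasDerivAt_id x).const_mul 2).const_sub 3).sub_const a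
        have td : HasDerivAt (fun y : ℝ => 2 * (2*y + a) * (3 - 2*y - a))
            ((2*2) * (3 - 2*x - a) + (2 * (2*x + a)) * (-2)) x := td1.mul td2
        have tq := tn.fun_div td hden.ne'
        have := (t1.fun_add t2).fun_sub tq
        refine this.congr_deriv (Eq.symm ?_)
        push_cast
        field_simp [hu.ne', hv.ne', hx0'.ne', h1x.ne', ne_of_gt (by linarith : (3:ℝ) - x*2 - a > 0),
          ne_of_gt (by linarith : x*2 + a > 0)]
        ring
      rw [h1.deriv]
      apply div_neg_of_neg_of_pos
      · have hax : 0 < a - x := by linarith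
        have h1 : 0 < (a-x)^3 := pow_pos hax 3
        have h2 : 0 < x*(2*x+a)^2 + (1-x)*(3-2*x-a)^2 := by positivity
        nlinarith [mul_pos h1 h2]
      · positivity
  have h := key (Set.left_mem_Icc.2 hpa.le) (Set.right_mem_Icc.2 hpa.le) hpa
  have hφa : φ a = 0 := by
    simp only [hφ, sub_self]
    norm_num
  rw [hφa] at h
  simp only [hφ] at h
  linarith


lemma cp_aux_chernoff (N k : ℕ) (hk : 0 < k) (p r : ℝ)
    (hp0 : 0 < p) (hp1 : p < 1) (hr : 1 ≤ r) :
    (∑ j ∈ Finset.Ico k (N+1), (N.choose j : ℝ) * p^j * (1-p)^(N-j)) * r^k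
      < (1 - p + p*r)^N := by
  have hq : (0:ℝ) < 1 - p := by linarith
  calc (∑ j ∈ Finset.Ico k (N+1), (N.choose j:ℝ) * p^j * (1-p)^(N-j)) * r^k
      = ∑ j ∈ Finset.Ico k (N+1), ((N.choose j:ℝ) * p^j * (1-p)^(N-j)) * r^k :=
        Finset.sum_mul _ _ _
    _ ≤ ∑ j ∈ Finset.Ico k (N+1), ((N.choose j:ℝ) * p^j * (1-p)^(N-j)) * r^j := by
        apply Finset.sum_le_sum
        intro j hj
        have hkj : k ≤ j := (Finset.mem_Ico.1 hj).1
        exact mul_le_mul_of_nonneg_left (pow_le_pow_right₀ hr hkj) (by positivity)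
    _ < ∑ j ∈ Finset.range (N+1), ((N.choose j:ℝ) * p^j * (1-p)^(N-j)) * r^j := by
        apply Finset.sum_lt_sum_of_subset
        · intro j hj
          rw [Finset.mem_Ico] at hj
          exact Finset.mem_range.2 hj.2
        · exact Finset.mem_range.2 (Nat.succ_pos N)
        · simp only [Finset.mem_Ico]
          omega
        · simp only [Nat.choose_zero_right, pow_zero, Nat.sub_zero, Nat.cast_one]
          positivity
        · intro j _ _
          have h0 : (0:ℝ) < r := lt_of_lt_of_le one_pos hr
          positivity
    _ = ∑ j ∈ Finset.range (N+1), (p*r)^j * (1-p)^(N-j) * (N.choose j:ℝ) :=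
        Finset.sum_congr rfl (by intros; ring)
    _ = (p*r + (1-p))^N := (add_pow _ _ N).symm
    _ = (1 - p + p*r)^N := by ring_nf

lemma cp_aux_split (N k : ℕ) (hkN : k ≤ N) (p : ℝ) :
    (∑ j ∈ Finset.range k, (N.choose j:ℝ)*p^j*(1-p)^(N-j))
      + (∑ j ∈ Finset.Ico k (N+1), (N.choose j:ℝ)*p^j*(1-p)^(N-j)) = 1 := by
  rw [Finset.range_eq_Ico, Finset.sum_Ico_consecutive _ (Nat.zero_le k) (by omega),
    ← Finset.range_eq_Ico]
  calc ∑ j ∈ Finset.range (N+1), (N.choose j:ℝ)*p^j*(1-p)^(N-j)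
      = ∑ j ∈ Finset.range (N+1), p^j * (1-p)^(N-j) * (N.choose j:ℝ) :=
        Finset.sum_congr rfl (by intros; ring)
    _ = (p + (1-p))^N := (add_pow _ _ N).symm
    _ = 1 := by norm_num

lemma cp_aux_anti (N k : ℕ) (hk0 : 0 < k) (hkN : k ≤ N) :
    AntitoneOn (fun p : ℝ => ∑ j ∈ Finset.range k, (N.choose j:ℝ)*p^j*(1-p)^(N-j))
      (Set.Icc 0 1) := by
  have hdiff : Differentiable ℝ (fun p : ℝ => ∑ j ∈ Finset.range k,
      (N.choose j:ℝ)*p^j*(1-p)^(N-j)) := by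
    apply Differentiable.fun_sum
    intro j _
    fun_prop
  apply antitoneOn_of_deriv_nonpos (convex_Icc 0 1) hdiff.continuous.continuousOn
    (hdiff.differentiableOn)
  intro x hx
  rw [interior_Icc] at hx
  obtain ⟨hx0, hx1⟩ := hx
  have h1x : (0:ℝ) < 1 - x := by linarith
  set g : ℕ → ℝ := fun j => (N.choose j : ℝ) * j * x^(j-1) * (1-x)^(N-j) with hg
  have hterm : ∀ j ∈ Finset.range k,
      HasDerivAt (fun p : ℝ => (N.choose j:ℝ)*p^j*(1-p)^(N-j)) (g j - g (j+1)) x := by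
    intro j hj
    have hjk : j < k := Finset.mem_range.1 hj
    have hjN : j + 1 ≤ N := le_trans hjk hkN
    have h1 : HasDerivAt (fun p:ℝ => (N.choose j:ℝ) * p^j) ((N.choose j:ℝ) * (↑j * x^(j-1))) x :=
      (hasDerivAt_pow j x).const_mul _
    have tin : HasDerivAt (fun p : ℝ => 1 - p) (-1 : ℝ) x := by
      simpa using (hasDerivAt_id x).const_sub 1
    have h2 : HasDerivAt (fun p:ℝ => (1-p)^(N-j)) ((↑(N-j) * (1-x)^(N-j-1)) * (-1)) x :=
      (hasDerivAt_pow (N-j) (1-x)).comp x tin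
    have hcast : (N.choose j : ℝ) * ((N - j : ℕ) : ℝ) = (N.choose (j+1) : ℝ) * ((j:ℝ)+1) := by
      exact_mod_cast (Nat.choose_succ_right_eq N j).symm
    refine (h1.fun_mul h2).congr_deriv (Eq.symm ?_)
    have hsub : N - j - 1 = N - (j+1) := by omega
    simp only [hg, hsub, Nat.add_sub_cancel]
    push_cast
    linear_combination (x^j * (1-x)^(N-(j+1))) * hcast
  have hsum := HasDerivAt.fun_sum hterm
  rw [hsum.deriv, Finset.sum_range_sub' g k]
  have hg0 : g 0 = 0 := by simp [hg]
  have hgk : 0 ≤ g k := by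
    have : (0:ℝ) ≤ x := hx0.le
    positivity
  rw [hg0]
  linarith


set_option maxHeartbeats 1000000 in
/-- The Clopper–Pearson lower confidence limit is bounded below by `ℒ(k)`. -/
theorem clopper_pearson_L_lt_lower
    (N : ℕ) (hN : 0 < N) (δ : ℝ) (hδ : δ ∈ Set.Ioo (0:ℝ) 1)
    (k : ℕ) (hk0 : 0 < k) (hkN : k ≤ N)
    (θ : ℝ) (hθ : θ = 9 / (8 * Real.log (2 / δ)))
    (L : ℝ)
    (hL : L = (k : ℝ) / N +
      3 / 4 * ((1 - 2 * k / N - Real.sqrt (1 + 4 * θ * k * (1 - (k : ℝ) / N))) / (1 + θ * N)))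
    (punder : ℝ) (hpunder : punder ∈ Set.Ioo (0:ℝ) 1)
    (hsum : ∑ j ∈ Finset.range k,
      (N.choose j : ℝ) * punder ^ j * (1 - punder) ^ (N - j) = 1 - δ / 2) :
    L < punder := by
  obtain ⟨hδ0, hδ1⟩ := hδ
  obtain ⟨hpu0, hpu1⟩ := hpunder
  by_contra hcon
  push_neg at hcon
  have hN0 : (0:ℝ) < N := Nat.cast_pos.2 hN
  set a : ℝ := (k:ℝ)/N with ha
  have hk0' : (0:ℝ) < k := Nat.cast_pos.2 hk0
  have ha0 : 0 < a := div_pos hk0' hN0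
  have hkN' : (k:ℝ) ≤ N := Nat.cast_le.2 hkN
  have ha1 : a ≤ 1 := by rw [ha, div_le_one hN0]; exact hkN'
  have hc0 : 0 < Real.log (2/δ) := Real.log_pos (by rw [lt_div_iff₀ hδ0]; linarith)
  set c := Real.log (2/δ) with hcdef
  have hθ0 : 0 < θ := by rw [hθ]; positivity
  have hD0 : (0:ℝ) < 1 + θ * N := by positivity
  have hrad : (1:ℝ) ≤ 1 + 4*θ*k*(1 - a) := by
    nlinarith [mul_nonneg (mul_nonneg (mul_nonneg (by norm_num : (0:ℝ) ≤ 4) hθ0.le) hk0'.le)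
      (sub_nonneg.2 ha1)]
  set S := Real.sqrt (1 + 4*θ*(k:ℝ)*(1 - a)) with hSdef
  have hS1 : 1 ≤ S := by
    have := Real.sqrt_le_sqrt hrad
    rwa [Real.sqrt_one] at this
  have hS2 : S^2 = 1 + 4*θ*k*(1 - a) := Real.sq_sqrt (by linarith)
  have h2a : 2*(k:ℝ)/(N:ℝ) = 2*a := by rw [mul_div_assoc, ← ha]
  rw [h2a] at hL
  have hS : S = 1 - 2*a + (4/3)*(1+θ*N)*(a - L) := by
    rw [hL]
    field_simp
    ring
  have hLa : L < a := by
    have hneg : (1 - 2*a - S)/(1 + θ*N) < 0 :=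
      div_neg_of_neg_of_pos (by linarith) hD0
    rw [hL]; nlinarith
  have hL0 : 0 < L := lt_of_lt_of_le hpu0 hcon
  have hL1 : L < 1 := lt_of_lt_of_le hLa ha1
  have hk' : (k:ℝ) = a * N := by rw [ha]; field_simp
  have hQ : (1 - 2*a + (4/3)*(1+θ*N)*(a-L))^2 = 1 + 4*θ*(a*(N:ℝ))*(1-a) := by
    rw [← hS, hS2, hk']
  have hT : (1+θ*(N:ℝ)) * (4*θ*N*(a-L)^2) = (1+θ*(N:ℝ)) * ((2*L+a)*(3-2*L-a)) := by
    linear_combination (9/4) * hQ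
  have hT' : 4*θ*(N:ℝ)*(a-L)^2 = (2*L+a)*(3-2*L-a) := mul_left_cancel₀ hD0.ne' hT
  have hd2 : (0:ℝ) < 2*(2*L+a)*(3-2*L-a) := by nlinarith
  have hcθ : 8 * c * θ = 9 := by rw [hθ]; field_simp
  have h9 : (N:ℝ)*(9*(a-L)^2) = c * (2*(2*L+a)*(3-2*L-a)) := by
    linear_combination 2*c*hT' - (N:ℝ)*(a-L)^2*hcθ
  have hc_eq : c = (N:ℝ) * (9*(a-L)^2) / (2*(2*L+a)*(3-2*L-a)) := by
    rw [eq_div_iff hd2.ne']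
    linear_combination -h9
  have hkl := cp_aux_kl a L hL0 hLa ha1
  have hckl : c < (N:ℝ) * (a * (Real.log a - Real.log L)
      + (1 - a) * (Real.log (1 - a) - Real.log (1 - L))) := by
    rw [hc_eq, mul_div_assoc]
    exact (mul_lt_mul_iff_right₀ hN0).2 hkl
  have hδ2 : Real.exp (-c) = δ/2 := by
    rw [hcdef, Real.exp_neg, Real.exp_log (by positivity), inv_div]
  have hTail : (∑ j ∈ Finset.Ico k (N+1), (N.choose j:ℝ)*L^j*(1-L)^(N-j)) < δ/2 := by
    rcases hkN.lt_or_eq with hkN'' | rfl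
    · -- k < N
      have ha1' : a < 1 := by rw [ha, div_lt_one hN0]; exact_mod_cast hkN''
      have h1a : (0:ℝ) < 1 - a := by linarith
      have h1L : (0:ℝ) < 1 - L := by linarith
      set r : ℝ := a*(1-L)/(L*(1-a)) with hrdef
      have hr0 : 0 < r := by positivity
      have hr1 : 1 ≤ r := by
        rw [hrdef, le_div_iff₀ (by positivity)]
        nlinarith
      have hch := cp_aux_chernoff N k hk0 L r hL0 hL1 hr1
      have hTA : (∑ j ∈ Finset.Ico k (N+1), (N.choose j:ℝ)*L^j*(1-L)^(N-j))
          < (1 - L + L*r)^N / r^k := (lt_div_iff₀ (pow_pos hr0 k)).2 hch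
      have hreq : 1 - L + L*r = (1-L)/(1-a) := by
        rw [hrdef]
        field_simp
        ring
      rw [hreq] at hTA
      have hApos : (0:ℝ) < ((1-L)/(1-a))^N / r^k := by positivity
      have hA : ((1-L)/(1-a))^N / r^k
          = Real.exp (-((N:ℝ) * (a * (Real.log a - Real.log L)
              + (1 - a) * (Real.log (1 - a) - Real.log (1 - L))))) := by
        rw [← Real.exp_log hApos]
        congr 1
        rw [Real.log_div (by positivity) (by positivity), Real.log_pow, Real.log_pow,
          Real.log_div h1L.ne' h1a.ne', hrdef,
          Real.log_div (by positivity) (by positivity),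
          Real.log_mul ha0.ne' h1L.ne', Real.log_mul hL0.ne' h1a.ne']
        linear_combination (Real.log L + Real.log (1-a) - Real.log a - Real.log (1-L)) * hk'
      rw [hA] at hTA
      calc (∑ j ∈ Finset.Ico k (N+1), (N.choose j:ℝ)*L^j*(1-L)^(N-j))
          < Real.exp (-((N:ℝ) * (a * (Real.log a - Real.log L)
              + (1 - a) * (Real.log (1 - a) - Real.log (1 - L))))) := hTA
        _ < Real.exp (-c) := Real.exp_lt_exp.2 (by linarith)
        _ = δ/2 := hδ2
    · -- k = N
      have haa : a = 1 := by rw [ha]; exact div_self hN0.ne'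
      have hsingle : (∑ j ∈ Finset.Ico k (k+1), (k.choose j:ℝ)*L^j*(1-L)^(k-j)) = L^k := by
        rw [Nat.Ico_succ_singleton, Finset.sum_singleton]
        simp [Nat.choose_self, Nat.sub_self]
      rw [hsingle]
      have hklv : (k:ℝ) * (a * (Real.log a - Real.log L)
          + (1 - a) * (Real.log (1 - a) - Real.log (1 - L))) = -((k:ℝ) * Real.log L) := by
        rw [haa]
        simp
      rw [hklv] at hckl
      have hLk : L^k = Real.exp ((k:ℝ) * Real.log L) := by
        rw [← Real.log_pow, Real.exp_log (pow_pos hL0 k)]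
      rw [hLk, ← hδ2]
      exact Real.exp_lt_exp.2 (by linarith)
  have hsplit := cp_aux_split N k hkN L
  have hanti := cp_aux_anti N k hk0 hkN
  have hmono := hanti (Set.mem_Icc.2 ⟨hpu0.le, hpu1.le⟩) (Set.mem_Icc.2 ⟨hL0.le, hL1.le⟩) hcon
  simp only at hmono
  rw [hsum] at hmono
  linarith
end

section
/- Let N be a positive integer, p ∈ (0,1), and ε ∈ (0, 1 − p). If K is a Binomial(N,p) random variable, then Pr{K/N ≥ p + ε} ≤ exp(− N ε² / (2 (p + ε/3)(1 − p − ε/3))); that is, ∑_{k=⌈N(p+ε)⌉}^{N} C(N,k) p^k (1−p)^(N−k) ≤ exp(− N ε² / (2 (p + ε/3)(1 − p − ε/3))). -/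
open Real

namespace MassartAux

lemma key_poly (x y s : ℝ) (hx : 0 ≤ x) (hy : 0 ≤ y) (hs : 0 ≤ s) :
    (x+3*s)*y*((x*y+3*s*x+s^2)^2 + s^2*((x+s)*(y+2*s))) ≤ ((x+s)*(y+2*s))^3 := by
  have h1 : 0 ≤ x^2 - x*y + y^2 := by nlinarith [sq_nonneg (x-y), mul_nonneg hx hy]
  have a1 : (0:ℝ) ≤ s^6 := pow_nonneg hs 6
  have a2 : (0:ℝ) ≤ y*s^5 := mul_nonneg hy (pow_nonneg hs 5)
  have a3 : (0:ℝ) ≤ y^2*s^4 := mul_nonneg (pow_nonneg hy 2) (pow_nonneg hs 4)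
  have a4 : (0:ℝ) ≤ y^3*s^3 := mul_nonneg (pow_nonneg hy 3) (pow_nonneg hs 3)
  have a5 : (0:ℝ) ≤ x*s^5 := mul_nonneg hx (pow_nonneg hs 5)
  have a6 : (0:ℝ) ≤ x*y*s^4 := mul_nonneg (mul_nonneg hx hy) (pow_nonneg hs 4)
  have a7 : (0:ℝ) ≤ x*y^2*s^3 := mul_nonneg (mul_nonneg hx (pow_nonneg hy 2)) (pow_nonneg hs 3)
  have a8 : (0:ℝ) ≤ x^2*s^4 := mul_nonneg (pow_nonneg hx 2) (pow_nonneg hs 4)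
  have a9 : (0:ℝ) ≤ x^2*y*s^3 := mul_nonneg (mul_nonneg (pow_nonneg hx 2) hy) (pow_nonneg hs 3)
  have a10 : (0:ℝ) ≤ x^3*s^3 := mul_nonneg (pow_nonneg hx 3) (pow_nonneg hs 3)
  have a11 : (0:ℝ) ≤ x*y*s^2*(x^2-x*y+y^2) :=
    mul_nonneg (mul_nonneg (mul_nonneg hx hy) (pow_nonneg hs 2)) h1
  nlinarith [a1,a2,a3,a4,a5,a6,a7,a8,a9,a10,a11]

noncomputable def F (p t : ℝ) : ℝ :=
  (p+t)*(Real.log (p+t) - Real.log p) + (1-p-t)*(Real.log (1-p-t) - Real.log (1-p))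

noncomputable def F1 (p t : ℝ) : ℝ :=
  Real.log (p+t) - Real.log p - (Real.log (1-p-t) - Real.log (1-p))

noncomputable def F2 (p t : ℝ) : ℝ := 1/(p+t) + 1/(1-p-t)

noncomputable def Dd (p t : ℝ) : ℝ := (p+t/3)*(1-p-t/3)

noncomputable def Dd' (p t : ℝ) : ℝ := ((1-p-t/3) - (p+t/3))/3

noncomputable def U (p t : ℝ) : ℝ := t^2/(2 * Dd p t)

noncomputable def U1 (p t : ℝ) : ℝ := (2*t*Dd p t - t^2 * Dd' p t)/(2*(Dd p t)^2)

noncomputable def U2 (p t : ℝ) : ℝ :=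
  ((Dd p t - t*Dd' p t)^2 + t^2 * Dd p t/9)/(Dd p t)^3

lemma hasDerivAt_F (p t : ℝ) (h1 : 0 < p+t) (h2 : 0 < 1-p-t) :
    HasDerivAt (F p) (F1 p t) t := by
  have d1 : HasDerivAt (fun t => Real.log (p+t)) (1/(p+t)) t := by
    have := (Real.hasDerivAt_log h1.ne').comp t ((hasDerivAt_id t).const_add p)
    simpa [Function.comp_def] using this
  have d2 : HasDerivAt (fun t => Real.log (1-p-t)) (-(1/(1-p-t))) t := by
    have h : HasDerivAt (fun t : ℝ => 1-p-t) (-1) t := by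
      simpa using ((hasDerivAt_id t).const_sub (1-p))
    have := (Real.hasDerivAt_log h2.ne').comp t h
    simp at this
    exact this.congr_deriv (by ring)
  have e1 : HasDerivAt (fun t => (p+t)*(Real.log (p+t) - Real.log p))
      (1*(Real.log (p+t) - Real.log p) + (p+t)*(1/(p+t))) t :=
    (((hasDerivAt_id t).const_add p)).mul (d1.sub_const _)
  have e2 : HasDerivAt (fun t => (1-p-t)*(Real.log (1-p-t) - Real.log (1-p)))
      ((-1)*(Real.log (1-p-t) - Real.log (1-p)) + (1-p-t)*(-(1/(1-p-t)))) t := by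
    have h : HasDerivAt (fun t : ℝ => 1-p-t) (-1) t := by
      simpa using ((hasDerivAt_id t).const_sub (1-p))
    exact h.mul (d2.sub_const _)
  have := e1.add e2
  refine this.congr_deriv ?_
  unfold F1
  field_simp
  ring

lemma hasDerivAt_F1 (p t : ℝ) (h1 : 0 < p+t) (h2 : 0 < 1-p-t) :
    HasDerivAt (F1 p) (F2 p t) t := by
  have d1 : HasDerivAt (fun t => Real.log (p+t)) (1/(p+t)) t := by
    have := (Real.hasDerivAt_log h1.ne').comp t ((hasDerivAt_id t).const_add p)
    simpa [Function.comp_def] using this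
  have d2 : HasDerivAt (fun t => Real.log (1-p-t)) (-(1/(1-p-t))) t := by
    have h : HasDerivAt (fun t : ℝ => 1-p-t) (-1) t := by
      simpa using ((hasDerivAt_id t).const_sub (1-p))
    have := (Real.hasDerivAt_log h2.ne').comp t h
    simp at this
    exact this.congr_deriv (by ring)
  have := (d1.sub_const (Real.log p)).sub (d2.sub_const (Real.log (1-p)))
  refine this.congr_deriv ?_
  unfold F2; ring

lemma hasDerivAt_Dd (p t : ℝ) : HasDerivAt (Dd p) (Dd' p t) t := by
  have h1 : HasDerivAt (fun t : ℝ => p+t/3) (1/3) t := by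
    simpa using ((hasDerivAt_id t).div_const 3).const_add p
  have h2 : HasDerivAt (fun t : ℝ => 1-p-t/3) (-(1/3)) t := by
    simpa using ((hasDerivAt_id t).div_const 3).const_sub (1-p)
  have := h1.mul h2
  refine this.congr_deriv ?_
  unfold Dd'; ring

lemma hasDerivAt_U (p t : ℝ) (hD : Dd p t ≠ 0) : HasDerivAt (U p) (U1 p t) t := by
  have hn : HasDerivAt (fun t : ℝ => t^2) (2*t) t := by
    simpa using (hasDerivAt_pow 2 t)
  have hd : HasDerivAt (fun t => 2 * Dd p t) (2 * Dd' p t) t :=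
    (hasDerivAt_Dd p t).const_mul 2
  have := hn.div hd (by simpa using hD)
  refine this.congr_deriv ?_
  unfold U1
  field_simp

lemma hasDerivAt_U1 (p t : ℝ) (hD : Dd p t ≠ 0) : HasDerivAt (U1 p) (U2 p t) t := by
  have hD' : HasDerivAt (Dd' p) (-2/9) t := by
    have h : HasDerivAt (fun t : ℝ => ((1-p-t/3) - (p+t/3))/3) (((-(1/3)) - (1/3))/3) t := by
      apply HasDerivAt.div_const
      exact (((hasDerivAt_id t).div_const 3).const_sub (1-p)).sub
        (((hasDerivAt_id t).div_const 3).const_add p)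
    exact h.congr_deriv (by norm_num)
  have hn : HasDerivAt (fun t => 2*t*Dd p t - t^2 * Dd' p t)
      ((2*1)*Dd p t + 2*t*Dd' p t - ((2*t) * Dd' p t + t^2 * (-2/9))) t := by
    exact (((hasDerivAt_id t).const_mul 2).mul (hasDerivAt_Dd p t)).sub
      ((by simpa using (hasDerivAt_pow 2 t) : HasDerivAt (fun t : ℝ => t^2) (2*t) t).mul hD')
  have hden : HasDerivAt (fun t => 2*(Dd p t)^2) (2*(2*Dd p t * Dd' p t)) t := by
    exact ((hasDerivAt_Dd p t).pow 2 |>.const_mul 2).congr_deriv (by ring)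
  have := hn.div hden (by simpa [pow_eq_zero_iff] using hD)
  refine this.congr_deriv ?_
  unfold U2
  have h3 : (Dd p t)^3 ≠ 0 := pow_ne_zero _ hD
  field_simp
  ring

lemma Dd_pos (p t : ℝ) (hp : 0 < p) (ht : 0 ≤ t) (h2 : 0 < 1-p-t) : 0 < Dd p t := by
  unfold Dd; nlinarith

lemma U2_le_F2 (p t : ℝ) (hp : 0 < p) (ht : 0 ≤ t) (h2 : 0 < 1-p-t) :
    U2 p t ≤ F2 p t := by
  have h1 : 0 < p + t := by linarith
  have hD : 0 < Dd p t := Dd_pos p t hp ht h2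
  have hg : 0 < (p+t)*(1-p-t) := mul_pos h1 h2
  have hF2 : F2 p t = 1/((p+t)*(1-p-t)) := by
    unfold F2; field_simp; ring
  rw [hF2, U2, div_le_div_iff₀ (by positivity) hg]
  have key := key_poly p (1-p-t) (t/3) hp.le (by linarith) (by linarith)
  have e1 : (p+t)*(1-p-t) = (p+3*(t/3))*(1-p-t) := by ring
  have e2 : Dd p t = (p+(t/3))*((1-p-t)+2*(t/3)) := by unfold Dd; ring
  have e3 : Dd p t - t*Dd' p t = p*(1-p-t)+3*(t/3)*p+(t/3)^2 := by unfold Dd Dd'; ring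
  have e4 : t^2 * Dd p t/9 = (t/3)^2*((p+(t/3))*((1-p-t)+2*(t/3))) := by unfold Dd; ring
  calc ((Dd p t - t*Dd' p t)^2 + t^2 * Dd p t/9) * ((p+t)*(1-p-t))
      = (p+3*(t/3))*(1-p-t)*((p*(1-p-t)+3*(t/3)*p+(t/3)^2)^2
          + (t/3)^2*((p+(t/3))*((1-p-t)+2*(t/3)))) := by
        rw [e3, e4]; ring
    _ ≤ ((p+(t/3))*((1-p-t)+2*(t/3)))^3 := key
    _ = 1 * Dd p t ^3 := by rw [e2]; ring

lemma kl_ge (p ε : ℝ) (hp0 : 0 < p) (hp1 : p < 1) (hε0 : 0 < ε) (hε1 : ε < 1 - p) :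
    U p ε ≤ F p ε := by
  have hsub : ∀ t ∈ Set.Icc (0:ℝ) ε, 0 < p + t ∧ 0 < 1 - p - t ∧ 0 < Dd p t := by
    intro t ht
    obtain ⟨ht0, ht1⟩ := ht
    refine ⟨by linarith, by linarith, Dd_pos p t hp0 ht0 (by linarith)⟩
  -- first layer: F1 - U1 ≥ 0 on [0, ε]
  have step1 : ∀ t ∈ Set.Icc (0:ℝ) ε, U1 p t ≤ F1 p t := by
    intro t ht
    obtain ⟨h1, h2, hD⟩ := hsub t ht
    have mono : MonotoneOn (fun t => F1 p t - U1 p t) (Set.Icc 0 t) := by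
      apply monotoneOn_of_deriv_nonneg (convex_Icc 0 t)
      · apply ContinuousOn.sub
        · intro s hs
          obtain ⟨hs1, hs2, hsD⟩ := hsub s ⟨hs.1, le_trans hs.2 ht.2⟩
          exact (hasDerivAt_F1 p s hs1 hs2).continuousAt.continuousWithinAt
        · intro s hs
          obtain ⟨hs1, hs2, hsD⟩ := hsub s ⟨hs.1, le_trans hs.2 ht.2⟩
          exact (hasDerivAt_U1 p s hsD.ne').continuousAt.continuousWithinAt
      · intro s hs
        rw [interior_Icc] at hs
        obtain ⟨hs1, hs2, hsD⟩ := hsub s ⟨hs.1.le, le_trans hs.2.le ht.2⟩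
        exact ((hasDerivAt_F1 p s hs1 hs2).sub (hasDerivAt_U1 p s hsD.ne')).differentiableAt.differentiableWithinAt
      · intro s hs
        rw [interior_Icc] at hs
        obtain ⟨hs1, hs2, hsD⟩ := hsub s ⟨hs.1.le, le_trans hs.2.le ht.2⟩
        rw [show (fun t => F1 p t - U1 p t) = F1 p - U1 p from rfl, ((hasDerivAt_F1 p s hs1 hs2).sub (hasDerivAt_U1 p s hsD.ne')).deriv]
        have := U2_le_F2 p s hp0 hs.1.le hs2
        linarith
    have h0 : F1 p 0 - U1 p 0 = 0 := by
      unfold F1 U1; simp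
    have := mono (Set.left_mem_Icc.mpr ht.1) (Set.right_mem_Icc.mpr ht.1) ht.1
    simp only at this
    linarith [h0 ▸ this]
  -- second layer
  have mono2 : MonotoneOn (fun t => F p t - U p t) (Set.Icc 0 ε) := by
    apply monotoneOn_of_deriv_nonneg (convex_Icc 0 ε)
    · apply ContinuousOn.sub
      · intro s hs
        obtain ⟨hs1, hs2, hsD⟩ := hsub s hs
        exact (hasDerivAt_F p s hs1 hs2).continuousAt.continuousWithinAt
      · intro s hs
        obtain ⟨hs1, hs2, hsD⟩ := hsub s hs
        exact (hasDerivAt_U p s hsD.ne').continuousAt.continuousWithinAt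
    · intro s hs
      rw [interior_Icc] at hs
      obtain ⟨hs1, hs2, hsD⟩ := hsub s ⟨hs.1.le, hs.2.le⟩
      exact ((hasDerivAt_F p s hs1 hs2).sub (hasDerivAt_U p s hsD.ne')).differentiableAt.differentiableWithinAt
    · intro s hs
      rw [interior_Icc] at hs
      obtain ⟨hs1, hs2, hsD⟩ := hsub s ⟨hs.1.le, hs.2.le⟩
      rw [show (fun t => F p t - U p t) = F p - U p from rfl, ((hasDerivAt_F p s hs1 hs2).sub (hasDerivAt_U p s hsD.ne')).deriv]
      have := step1 s ⟨hs.1.le, hs.2.le⟩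
      linarith
  have h0 : F p 0 - U p 0 = 0 := by
    unfold F U; simp
  have := mono2 (Set.left_mem_Icc.mpr hε0.le) (Set.right_mem_Icc.mpr hε0.le) hε0.le
  simp only at this
  linarith [h0 ▸ this]

end MassartAux

open MassartAux in
/-- Massart's upper-tail inequality for the binomial distribution:
for `ε ∈ (0, 1 - p)`,
`Pr{K/N ≥ p + ε} ≤ exp(-Nε² / (2(p + ε/3)(1 - p - ε/3)))`. -/
theorem massart_upper_tail
    (N : ℕ) (hN : 0 < N) (p : ℝ) (hp : p ∈ Set.Ioo (0:ℝ) 1)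
    (ε : ℝ) (hε : ε ∈ Set.Ioo 0 (1 - p)) :
    ∑ k ∈ Finset.range (N + 1),
      (if (N : ℝ) * (p + ε) ≤ k then (N.choose k : ℝ) * p ^ k * (1 - p) ^ (N - k) else 0)
    ≤ Real.exp (- (N * ε ^ 2) / (2 * (p + ε / 3) * (1 - p - ε / 3))) := by
  obtain ⟨hp0, hp1⟩ := hp
  obtain ⟨hε0, hε1⟩ := hε
  set q : ℝ := p + ε with hq
  have hq0 : 0 < q := by positivity
  have hq1 : q < 1 := by simp only [hq]; linarith
  have h1q : 0 < 1 - q := by linarith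
  have h1p : 0 < 1 - p := by linarith
  have hpq : p < q := by simp only [hq]; linarith
  set r : ℝ := (q*(1-p))/(p*(1-q)) with hr
  have hr1 : 1 < r := by
    rw [hr, lt_div_iff₀ (by positivity)]
    nlinarith
  have hr0 : 0 < r := lt_trans one_pos hr1
  -- step A : termwise bound
  have hA : ∑ k ∈ Finset.range (N + 1),
      (if (N : ℝ) * q ≤ k then (N.choose k : ℝ) * p ^ k * (1 - p) ^ (N - k) else 0)
      ≤ ∑ k ∈ Finset.range (N + 1),
        r ^ (-((N:ℝ)*q)) * ((N.choose k : ℝ) * (p*r) ^ k * (1 - p) ^ (N - k)) := by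
    apply Finset.sum_le_sum
    intro k _
    by_cases h : (N : ℝ) * q ≤ k
    · rw [if_pos h]
      have hterm : (0:ℝ) ≤ (N.choose k : ℝ) * p ^ k * (1 - p) ^ (N - k) := by positivity
      have h1 : (1:ℝ) ≤ r ^ ((k:ℝ) - (N:ℝ)*q) :=
        Real.one_le_rpow hr1.le (by linarith)
      have h2 : r ^ ((k:ℝ) - (N:ℝ)*q) = r ^ (-((N:ℝ)*q)) * r ^ k := by
        rw [sub_eq_add_neg, Real.rpow_add hr0, Real.rpow_natCast, mul_comm]
      calc (N.choose k : ℝ) * p ^ k * (1 - p) ^ (N - k)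
          ≤ r ^ ((k:ℝ) - (N:ℝ)*q) * ((N.choose k : ℝ) * p ^ k * (1 - p) ^ (N - k)) :=
            le_mul_of_one_le_left hterm h1
        _ = r ^ (-((N:ℝ)*q)) * ((N.choose k : ℝ) * (p*r) ^ k * (1 - p) ^ (N - k)) := by
            rw [h2, mul_pow]; ring
    · rw [if_neg h]
      positivity
  -- step B : closed form of the bound
  have hBsum : ∑ k ∈ Finset.range (N + 1),
      r ^ (-((N:ℝ)*q)) * ((N.choose k : ℝ) * (p*r) ^ k * (1 - p) ^ (N - k))
      = r ^ (-((N:ℝ)*q)) * (p*r + (1-p)) ^ N := by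
    rw [← Finset.mul_sum]
    congr 1
    rw [add_pow]
    apply Finset.sum_congr rfl
    intro k _
    ring
  have hpr : p * r + (1-p) = (1-p)/(1-q) := by
    rw [hr]
    field_simp
    ring
  have hexp : r ^ (-((N:ℝ)*q)) * (p*r + (1-p)) ^ N
      = Real.exp (-(N * F p ε)) := by
    rw [hpr]
    have hd : (0:ℝ) < (1-p)/(1-q) := by positivity
    rw [Real.rpow_def_of_pos hr0]
    have h2 : ((1-p)/(1-q)) ^ N = Real.exp ((N:ℝ) * Real.log ((1-p)/(1-q))) := by
      rw [Real.exp_nat_mul, Real.exp_log hd]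
    rw [h2, ← Real.exp_add]
    congr 1
    have hlr : Real.log r = Real.log q + Real.log (1-p) - (Real.log p + Real.log (1-q)) := by
      rw [hr, Real.log_div (by positivity) (by positivity),
        Real.log_mul hq0.ne' h1p.ne', Real.log_mul hp0.ne' h1q.ne']
    have hl2 : Real.log ((1-p)/(1-q)) = Real.log (1-p) - Real.log (1-q) :=
      Real.log_div h1p.ne' h1q.ne'
    rw [hlr, hl2]
    have hqe : q = p + ε := hq
    have h1qe : 1 - q = 1 - p - ε := by rw [hq]; ring
    unfold F
    rw [← hqe, ← h1qe]
    ring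
  -- step C : compare exponents
  have hC : Real.exp (-(N * F p ε)) ≤
      Real.exp (- (N * ε ^ 2) / (2 * (p + ε / 3) * (1 - p - ε / 3))) := by
    rw [Real.exp_le_exp]
    have hkl := kl_ge p ε hp0 hp1 hε0 hε1
    have hDpos : 0 < Dd p ε := by
      unfold Dd; nlinarith
    have hU : U p ε = ε^2/(2 * ((p+ε/3)*(1-p-ε/3))) := by unfold U Dd; ring_nf
    have heq : - (N * ε ^ 2) / (2 * (p + ε / 3) * (1 - p - ε / 3))
        = -((N:ℝ) * (ε^2/(2 * ((p+ε/3)*(1-p-ε/3))))) := by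
      field_simp
    rw [heq]
    have hN0 : (0:ℝ) ≤ N := Nat.cast_nonneg N
    nlinarith [hkl, hU]
  calc ∑ k ∈ Finset.range (N + 1),
      (if (N : ℝ) * (p + ε) ≤ k then (N.choose k : ℝ) * p ^ k * (1 - p) ^ (N - k) else 0)
      ≤ r ^ (-((N:ℝ)*q)) * (p*r + (1-p)) ^ N := le_trans hA (le_of_eq hBsum)
    _ = Real.exp (-(N * F p ε)) := hexp
    _ ≤ _ := hC
end

section
/- Let N be a positive integer and let k be an integer with 0 ≤ k ≤ N. Then for every x ∈ (k/N, 1), ∑_{j=0}^{k} C(N,j) x^j (1−x)^(N−j) ≤ exp(− N (x − k/N)² / (2 ((2/3)x + k/(3N)) (1 − (2/3)x − k/(3N)))). -/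
open Real

lemma aux0 (x : ℝ) (hx0 : 0 < x) (hx1 : x < 1) :
    9 * x / (4 * (3 - 2 * x)) ≤ - Real.log (1 - x) := by
  set F : ℝ → ℝ := fun p => - Real.log (1 - p) - 9 * p / (4 * (3 - 2 * p)) with hF
  have hHas : ∀ p ∈ Set.Icc (0:ℝ) x, HasDerivAt F
      (-(-1 / (1 - p)) - ((9 * (4 * (3 - 2 * p)) - 9 * p * (4 * (-2))) / (4 * (3 - 2 * p))^2)) p := by
    intro p hp
    have hp1 : p < 1 := lt_of_le_of_lt hp.2 hx1
    have h1p : (1:ℝ) - p ≠ 0 := by linarith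
    have hden : (4 * (3 - 2 * p)) ≠ 0 := by nlinarith [hp.1]
    have hlog : HasDerivAt (fun p : ℝ => Real.log (1 - p)) (-1 / (1 - p)) p :=
      ((hasDerivAt_id p).const_sub 1).log h1p
    have hnum : HasDerivAt (fun p : ℝ => 9 * p) 9 p := by
      simpa using (hasDerivAt_id p).const_mul 9
    have hd : HasDerivAt (fun p : ℝ => 4 * (3 - 2 * p)) (4 * (-2)) p := by
      have : HasDerivAt (fun p : ℝ => 3 - 2 * p) (-2) p := by
        simpa using ((hasDerivAt_id p).const_mul 2).const_sub 3
      simpa using this.const_mul 4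
    exact (hlog.neg).sub (hnum.div hd hden)
  have hmono : MonotoneOn F (Set.Icc 0 x) := by
    apply monotoneOn_of_deriv_nonneg (convex_Icc 0 x)
    · exact fun p hp => ((hHas p hp).differentiableAt).differentiableWithinAt.continuousWithinAt
    · intro p hp
      rw [interior_Icc] at hp
      exact ((hHas p (Set.mem_Icc_of_Ioo hp)).differentiableAt).differentiableWithinAt
    · intro p hp
      rw [interior_Icc] at hp
      rw [(hHas p (Set.mem_Icc_of_Ioo hp)).deriv]
      have hp0 := hp.1
      have hp1 : p < 1 := lt_trans hp.2 hx1
      have h1 : (0:ℝ) < 1 - p := by linarith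
      have h2 : (0:ℝ) < 3 - 2 * p := by linarith
      rw [sub_nonneg, neg_div, neg_neg, div_le_div_iff₀ (by positivity) h1]
      nlinarith [sq_nonneg (4 * p - 21/8)]
  have h0 : F 0 = 0 := by simp [hF]
  have := hmono (Set.left_mem_Icc.2 hx0.le) (Set.right_mem_Icc.2 hx0.le) hx0.le
  rw [h0] at this
  simp only [hF] at this
  linarith

lemma auxA (a x : ℝ) (ha : 0 < a) (hax : a < x) (hx1 : x < 1) :
    (x - a)^2 / (2/9 * ((a + 2*x) * (3 - (a + 2*x))))
      ≤ a * Real.log a - a * Real.log x + (1 - a) * Real.log (1 - a)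
        - (1 - a) * Real.log (1 - x) := by
  set C : ℝ := a * Real.log a + (1 - a) * Real.log (1 - a) with hC
  set F : ℝ → ℝ := fun p => C - a * Real.log p - (1 - a) * Real.log (1 - p)
      - (p - a)^2 / (2/9 * ((a + 2*p) * (3 - (a + 2*p)))) with hF
  have ha1 : a < 1 := lt_trans hax hx1
  have hHas : ∀ p ∈ Set.Icc a x, HasDerivAt F
      (0 - a * p⁻¹ - (1 - a) * (-1 / (1 - p))
        - ((2 * (p - a) * (2/9 * ((a + 2*p) * (3 - (a + 2*p))))
            - (p - a)^2 * (2/9 * (2 * (3 - (a + 2*p)) + (a + 2*p) * (-2))))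
          / (2/9 * ((a + 2*p) * (3 - (a + 2*p))))^2)) p := by
    intro p hp
    have hp0 : 0 < p := lt_of_lt_of_le ha hp.1
    have hp1 : p < 1 := lt_of_le_of_lt hp.2 hx1
    have h1p : (1:ℝ) - p ≠ 0 := by linarith
    have hc0 : (0:ℝ) < a + 2*p := by linarith
    have hc1 : (0:ℝ) < 3 - (a + 2*p) := by linarith
    have hDpos : (0:ℝ) < 2/9 * ((a + 2*p) * (3 - (a + 2*p))) := by
      have := mul_pos hc0 hc1; linarith
    have hDne : (2/9 * ((a + 2*p) * (3 - (a + 2*p)))) ≠ 0 := hDpos.ne'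
    have h1 : HasDerivAt (fun p : ℝ => a * Real.log p) (a * p⁻¹) p :=
      (Real.hasDerivAt_log hp0.ne').const_mul a
    have h2 : HasDerivAt (fun p : ℝ => (1 - a) * Real.log (1 - p)) ((1 - a) * (-1 / (1 - p))) p :=
      (((hasDerivAt_id p).const_sub 1).log h1p).const_mul (1 - a)
    have hl : HasDerivAt (fun p : ℝ => a + 2*p) 2 p := by
      simpa using ((hasDerivAt_id p).const_mul 2).const_add a
    have hm : HasDerivAt (fun p : ℝ => (a + 2*p) * (3 - (a + 2*p)))
        (2 * (3 - (a + 2*p)) + (a + 2*p) * (-2)) p := by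
      have := hl.mul (hl.const_sub 3)
      simp at this ⊢; exact this
    have hD : HasDerivAt (fun p : ℝ => 2/9 * ((a + 2*p) * (3 - (a + 2*p))))
        (2/9 * (2 * (3 - (a + 2*p)) + (a + 2*p) * (-2))) p := hm.const_mul (2/9)
    have hn : HasDerivAt (fun p : ℝ => (p - a)^2) (2 * (p - a)) p := by
      have := ((hasDerivAt_id p).sub_const a).pow 2
      simp at this ⊢; exact this
    have hg := hn.div hD hDne
    have := (((hasDerivAt_const p C).sub h1).sub h2).sub hg
    simp at this ⊢; exact this
  have hmono : MonotoneOn F (Set.Icc a x) := by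
    apply monotoneOn_of_deriv_nonneg (convex_Icc a x)
    · exact fun p hp => ((hHas p hp).differentiableAt).differentiableWithinAt.continuousWithinAt
    · intro p hp
      rw [interior_Icc] at hp
      exact ((hHas p (Set.mem_Icc_of_Ioo hp)).differentiableAt).differentiableWithinAt
    · intro p hp
      rw [interior_Icc] at hp
      rw [(hHas p (Set.mem_Icc_of_Ioo hp)).deriv]
      have hp0 : 0 < p := lt_trans ha hp.1
      have hpa : a < p := hp.1
      have hp1 : p < 1 := lt_trans hp.2 hx1
      have h1p : (0:ℝ) < 1 - p := by linarith
      have hc0 : (0:ℝ) < a + 2*p := by linarith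
      have hc1 : (0:ℝ) < 3 - (a + 2*p) := by linarith
      have hE : (0 - a * p⁻¹ - (1 - a) * (-1 / (1 - p))
        - ((2 * (p - a) * (2/9 * ((a + 2*p) * (3 - (a + 2*p))))
            - (p - a)^2 * (2/9 * (2 * (3 - (a + 2*p)) + (a + 2*p) * (-2))))
          / (2/9 * ((a + 2*p) * (3 - (a + 2*p))))^2))
        = ((p - a)^2 * ((p - a)/3) * ((1 - (a + 2*p)/3 - p)^2 + p * (1 - p)))
          / (3 * ((a + 2*p)/3)^2 * (1 - (a + 2*p)/3)^2 * (p * (1 - p))) := by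
        have e1 : (1:ℝ) - (a + 2*p)/3 = (3 - (a + 2*p))/3 := by ring
        rw [e1]
        have hn1 : (3 - (a + 2*p)) ≠ 0 := hc1.ne'
        have hn2 : (a + 2*p) ≠ 0 := hc0.ne'
        have hn3 : (1 - p) ≠ 0 := h1p.ne'
        have hn4 : p ≠ 0 := hp0.ne'
        generalize hq : a + 2*p = q at hn1 hn2 ⊢
        have ha' : a = q - 2*p := by linarith
        subst ha'
        field_simp
        ring
      rw [hE]
      have hnum : 0 ≤ (p - a)^2 * ((p - a)/3) * ((1 - (a + 2*p)/3 - p)^2 + p * (1 - p)) := by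
        apply mul_nonneg (mul_nonneg (sq_nonneg _) (by linarith))
        have : 0 ≤ p * (1 - p) := by positivity
        nlinarith [sq_nonneg (1 - (a + 2*p)/3 - p)]
      have hden : 0 < 3 * ((a + 2*p)/3)^2 * (1 - (a + 2*p)/3)^2 * (p * (1 - p)) := by
        have e1 : (1:ℝ) - (a + 2*p)/3 = (3 - (a + 2*p))/3 := by ring
        rw [e1]; positivity
      positivity
  have hFa : F a = 0 := by
    simp [hF, hC]
  have := hmono (Set.left_mem_Icc.2 hax.le) (Set.right_mem_Icc.2 hax.le) hax.le
  rw [hFa] at this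
  simp only [hF, hC] at this
  linarith

lemma klB (a x : ℝ) (ha : 0 ≤ a) (hax : a < x) (hx1 : x < 1) :
    (x - a)^2 / (2 * ((a + 2*x)/3) * (1 - (a + 2*x)/3))
      ≤ a * Real.log (a/x) + (1 - a) * Real.log ((1-a)/(1-x)) := by
  have hx0 : 0 < x := lt_of_le_of_lt ha hax
  have h1x : (0:ℝ) < 1 - x := by linarith
  rcases ha.eq_or_lt with haz | ha0
  · subst haz
    have h32 : (0:ℝ) < 3 - 2*x := by linarith
    have hR : (0:ℝ) * Real.log (0/x) + (1-0) * Real.log ((1-0)/(1-x)) = - Real.log (1-x) := by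
      rw [zero_mul, zero_add]
      norm_num [one_div, Real.log_inv]
    have hd : 2 * (((0:ℝ) + 2*x)/3) * (1 - ((0:ℝ) + 2*x)/3) = 4*x*(3-2*x)/9 := by ring
    have hL : (x - 0)^2 / (2 * (((0:ℝ) + 2*x)/3) * (1 - ((0:ℝ) + 2*x)/3)) = 9*x/(4*(3-2*x)) := by
      rw [hd]
      field_simp
      ring
    rw [hL, hR]
    exact aux0 x hx0 hx1
  · have ha1 : a < 1 := lt_trans hax hx1
    have h1a : (0:ℝ) < 1 - a := by linarith
    have hd : 2 * ((a + 2*x)/3) * (1 - (a + 2*x)/3) = 2/9 * ((a + 2*x) * (3 - (a + 2*x))) := by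
      ring
    calc (x - a)^2 / (2 * ((a + 2*x)/3) * (1 - (a + 2*x)/3))
        = (x - a)^2 / (2/9 * ((a + 2*x) * (3 - (a + 2*x)))) := by rw [hd]
      _ ≤ a * Real.log a - a * Real.log x + (1 - a) * Real.log (1 - a)
          - (1 - a) * Real.log (1 - x) := auxA a x ha0 hax hx1
      _ = a * Real.log (a/x) + (1 - a) * Real.log ((1-a)/(1-x)) := by
          rw [Real.log_div ha0.ne' hx0.ne', Real.log_div h1a.ne' h1x.ne']; ring

/-- For `x ∈ (k/N, 1)`, the binomial cdf at `k` satisfies the Massart-type bound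
`∑_{j=0}^{k} C(N,j) x^j (1-x)^(N-j) ≤ exp(-N(x - k/N)² / (2((2/3)x + k/(3N))(1 - (2/3)x - k/(3N))))`. -/
theorem binomial_cdf_upper_bound
    (N : ℕ) (hN : 0 < N) (k : ℕ) (hk : k ≤ N)
    (x : ℝ) (hx : x ∈ Set.Ioo ((k : ℝ) / N) 1) :
    ∑ j ∈ Finset.range (k + 1), (N.choose j : ℝ) * x ^ j * (1 - x) ^ (N - j)
    ≤ Real.exp (- (N * (x - (k : ℝ) / N) ^ 2) /
        (2 * (2 / 3 * x + k / (3 * N)) * (1 - 2 / 3 * x - k / (3 * N)))) := by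
  obtain ⟨hax, hx1⟩ := hx
  set a : ℝ := (k : ℝ) / N with ha_def
  have hN' : (0:ℝ) < N := Nat.cast_pos.2 hN
  have ha : 0 ≤ a := by positivity
  have hx0 : 0 < x := lt_of_le_of_lt ha hax
  have h1x : (0:ℝ) < 1 - x := by linarith
  have ha1 : a < 1 := lt_trans hax hx1
  have h1a : (0:ℝ) < 1 - a := by linarith
  set kl : ℝ := a * Real.log (a/x) + (1 - a) * Real.log ((1-a)/(1-x)) with hkl_def
  have key : ∑ j ∈ Finset.range (k + 1), (N.choose j : ℝ) * x ^ j * (1 - x) ^ (N - j)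
      ≤ Real.exp (-(N:ℝ) * kl) := by
    rcases Nat.eq_zero_or_pos k with hk0 | hk1
    · subst hk0
      have haz : a = 0 := by simp [ha_def]
      have hklv : kl = - Real.log (1 - x) := by
        rw [hkl_def, haz]
        simp [Real.log_div one_ne_zero h1x.ne']
      rw [hklv]
      have : -(N:ℝ) * - Real.log (1-x) = (N:ℝ) * Real.log (1-x) := by ring
      rw [this, Real.exp_nat_mul, Real.exp_log h1x]
      simp
    · -- Chernoff with optimal t
      have hk0' : (0:ℝ) < k := Nat.cast_pos.2 hk1
      have ha0 : 0 < a := by positivity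
      set t : ℝ := a * (1-x) / (x * (1-a)) with ht_def
      have ht0 : 0 < t := by positivity
      have ht1 : t ≤ 1 := by
        rw [ht_def, div_le_one (by positivity)]
        nlinarith
      have hsum : t^k * ∑ j ∈ Finset.range (k + 1), (N.choose j : ℝ) * x ^ j * (1 - x) ^ (N - j)
          ≤ (t * x + (1 - x))^N := by
        rw [Finset.mul_sum]
        calc ∑ j ∈ Finset.range (k + 1), t^k * ((N.choose j : ℝ) * x ^ j * (1 - x) ^ (N - j))
            ≤ ∑ j ∈ Finset.range (k + 1), (N.choose j : ℝ) * (t*x) ^ j * (1 - x) ^ (N - j) := by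
              apply Finset.sum_le_sum
              intro j hj
              have hjk : j ≤ k := Nat.lt_succ_iff.mp (Finset.mem_range.mp hj)
              have htk : t^k ≤ t^j := pow_le_pow_of_le_one ht0.le ht1 hjk
              calc t^k * ((N.choose j : ℝ) * x ^ j * (1 - x) ^ (N - j))
                  ≤ t^j * ((N.choose j : ℝ) * x ^ j * (1 - x) ^ (N - j)) :=
                    mul_le_mul_of_nonneg_right htk (by positivity)
                _ = (N.choose j : ℝ) * (t*x) ^ j * (1 - x) ^ (N - j) := by
                    rw [mul_pow]; ring
          _ ≤ ∑ j ∈ Finset.range (N + 1), (N.choose j : ℝ) * (t*x) ^ j * (1 - x) ^ (N - j) := by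
              apply Finset.sum_le_sum_of_subset_of_nonneg
              · exact Finset.range_subset_range.2 (by omega)
              · intro j _ _; positivity
          _ = (t * x + (1 - x))^N := by
              rw [add_pow]
              exact Finset.sum_congr rfl fun j _ => by ring
      have hS : ∑ j ∈ Finset.range (k + 1), (N.choose j : ℝ) * x ^ j * (1 - x) ^ (N - j)
          ≤ (t * x + (1 - x))^N / t^k := by
        rw [le_div_iff₀ (pow_pos ht0 k)]
        linarith [hsum]
      have hNa : (N:ℝ) * a = k := by
        rw [ha_def]; field_simp
      have hexp : Real.exp (-(N:ℝ) * kl) = (x/a)^k * ((1-x)/(1-a))^(N-k) := by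
        have e3 : ((N-k:ℕ):ℝ) = (N:ℝ) - k := by rw [Nat.cast_sub hk]
        have h1 : -(N:ℝ) * kl = (k:ℝ) * Real.log (x/a) + ((N-k:ℕ):ℝ) * Real.log ((1-x)/(1-a)) := by
          have e1 : Real.log (x/a) = - Real.log (a/x) := by rw [← Real.log_inv, inv_div]
          have e2 : Real.log ((1-x)/(1-a)) = - Real.log ((1-a)/(1-x)) := by
            rw [← Real.log_inv, inv_div]
          rw [hkl_def, e1, e2, e3]
          linear_combination (Real.log ((1-a)/(1-x)) - Real.log (a/x)) * hNa
        rw [h1, Real.exp_add, Real.exp_nat_mul, Real.exp_nat_mul,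
          Real.exp_log (by positivity), Real.exp_log (by positivity)]
      have hval : (t * x + (1 - x))^N / t^k = (x/a)^k * ((1-x)/(1-a))^(N-k) := by
        have htx : t * x + (1 - x) = (1-x)/(1-a) := by
          rw [ht_def]; field_simp; ring
        have hts : (1-x)/(1-a) / t = x/a := by
          rw [ht_def]; field_simp
        have hsplit : ((1-x)/(1-a))^N = ((1-x)/(1-a))^(N-k) * ((1-x)/(1-a))^k := by
          rw [← pow_add, Nat.sub_add_cancel hk]
        rw [htx, hsplit, mul_div_assoc, ← div_pow, hts]
        ring
      rw [hexp, ← hval]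
      exact hS
  refine le_trans key (Real.exp_le_exp.2 ?_)
  have hden_eq : 2 * (2/3 * x + (k:ℝ)/(3*N)) * (1 - 2/3 * x - (k:ℝ)/(3*N))
      = 2 * ((a + 2*x)/3) * (1 - (a + 2*x)/3) := by
    rw [ha_def]; field_simp; ring
  rw [hden_eq, neg_div, mul_div_assoc, neg_mul]
  exact neg_le_neg (mul_le_mul_of_nonneg_left (klB a x ha hax hx1) (Nat.cast_nonneg N))
end

section
/- Let N be a positive integer and let k be an integer with 1 ≤ k ≤ N. Then for every x ∈ (0, k/N), ∑_{j=0}^{k−1} C(N,j) x^j (1−x)^(N−j) ≥ 1 − exp(− N (x − k/N)² / (2 ((2/3)x + k/(3N)) (1 − (2/3)x − k/(3N)))). -/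
set_option maxHeartbeats 1000000

private lemma log_bound_aux (x : ℝ) (hx0 : 0 < x) (hx1 : x < 1) :
    9 * (1 - x) / (4 * (2 * x + 1)) ≤ -Real.log x := by
  set f : ℝ → ℝ := fun t => -Real.log t - 9 * (1 - t) / (4 * (2 * t + 1)) with hf
  have hderiv : ∀ t ∈ Set.Ioo x 1, HasDerivAt f (-(1/t) + 27 / (4 * (2*t+1)^2)) t := by
    intro t ht
    have ht0 : 0 < t := hx0.trans ht.1
    have hd1 : HasDerivAt (fun t : ℝ => -Real.log t) (-(1/t)) t :=
      (Real.hasDerivAt_log ht0.ne').neg.congr_deriv (by ring)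
    have hden : HasDerivAt (fun t : ℝ => 4 * (2 * t + 1)) (4 * 2) t := by
      simpa using (((hasDerivAt_id t).const_mul (2:ℝ)).add_const (1:ℝ)).const_mul (4:ℝ)
    have hnum : HasDerivAt (fun t : ℝ => 9 * (1 - t)) (9 * (0 - 1)) t := by
      simpa using ((hasDerivAt_const t (1:ℝ)).sub (hasDerivAt_id t)).const_mul (9:ℝ)
    have hdenne : 4 * (2 * t + 1) ≠ 0 := by positivity
    have hd2 := hnum.div hden hdenne
    have h := hd1.sub hd2
    refine h.congr_deriv ?_
    field_simp
    ring
  have hanti : AntitoneOn f (Set.Icc x 1) := by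
    apply antitoneOn_of_deriv_nonpos (convex_Icc x 1)
    · apply ContinuousOn.sub
      · exact (Real.continuousOn_log.mono (by
          intro t ht
          exact ne_of_gt (hx0.trans_le ht.1))).neg
      · exact ContinuousOn.div (by fun_prop) (by fun_prop)
          (fun t ht => by have := hx0.trans_le ht.1; positivity)
    · rw [interior_Icc]
      exact fun t ht => (hderiv t ht).differentiableAt.differentiableWithinAt
    · rw [interior_Icc]
      intro t ht
      rw [(hderiv t ht).deriv]
      have ht0 : 0 < t := hx0.trans ht.1
      have h1 : 27 / (4 * (2*t+1)^2) ≤ 1/t := by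
        rw [div_le_div_iff₀ (by positivity) ht0]
        nlinarith [sq_nonneg (4*t - 11/8)]
      linarith
  have h1 : f 1 = 0 := by simp [hf]
  have := hanti ⟨le_refl x, hx1.le⟩ ⟨hx1.le, le_refl 1⟩ hx1.le
  rw [h1] at this
  simp only [hf] at this
  linarith

private lemma kl_ge_aux (a x : ℝ) (hx0 : 0 < x) (hxa : x < a) (ha1 : a < 1) :
    (a - x)^2 / (2 * (2*x+a) * (3-(2*x+a)) / 9) ≤
      a * (Real.log a - Real.log x) + (1-a) * (Real.log (1-a) - Real.log (1-x)) := by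
  have ha0 : 0 < a := hx0.trans hxa
  set f : ℝ → ℝ := fun t => a * (Real.log a - Real.log t)
      + (1-a) * (Real.log (1-a) - Real.log (1-t))
      - (a-t)^2 / (2 * (2*t+a) * (3-(2*t+a)) / 9) with hf
  have hderiv : ∀ t ∈ Set.Ioo x a, HasDerivAt f
      (-((a-t)^3*((3-(2*t+a))^2-(3-2*(2*t+a))*(3*t)))
        / (t*(1-t)*(2*t+a)^2*(3-(2*t+a))^2)) t := by
    intro t ht
    have ht0 : 0 < t := hx0.trans ht.1
    have ht1 : t < 1 := ht.2.trans ha1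
    have hA : t ≠ 0 := ht0.ne'
    have hB : (1:ℝ) - t ≠ 0 := by intro h; nlinarith
    have hC : 2*t+a ≠ 0 := by positivity
    have hE : 3-(2*t+a) ≠ 0 := by intro h; nlinarith
    have hvne : 2 * (2*t+a) * (3-(2*t+a)) / 9 ≠ 0 := by
      simp only [div_ne_zero_iff]
      constructor
      · exact mul_ne_zero (mul_ne_zero two_ne_zero hC) hE
      · norm_num
    have hd1 : HasDerivAt (fun t : ℝ => a * (Real.log a - Real.log t)) (a * (0 - t⁻¹)) t :=
      ((hasDerivAt_const t (Real.log a)).sub (Real.hasDerivAt_log ht0.ne')).const_mul a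
    have hinner : HasDerivAt (fun t : ℝ => 1 - t) (0 - 1) t :=
      (hasDerivAt_const t (1:ℝ)).sub (hasDerivAt_id t)
    have hlog2 : HasDerivAt (fun t : ℝ => Real.log (1 - t)) ((1-t)⁻¹ * (0 - 1)) t :=
      (Real.hasDerivAt_log (by exact hB)).comp t hinner
    have hd2 : HasDerivAt (fun t : ℝ => (1-a) * (Real.log (1-a) - Real.log (1-t)))
        ((1-a) * (0 - (1-t)⁻¹ * (0 - 1))) t :=
      ((hasDerivAt_const t (Real.log (1-a))).sub hlog2).const_mul (1-a)
    have hu : HasDerivAt (fun t : ℝ => (a-t)^2) ((2:ℕ) * (a-t)^1 * (0 - 1)) t :=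
      HasDerivAt.fun_pow ((hasDerivAt_const t a).sub (hasDerivAt_id t)) 2
    have hs : HasDerivAt (fun t : ℝ => 2*t+a) (2*1+0) t :=
      ((hasDerivAt_id t).const_mul (2:ℝ)).add (hasDerivAt_const t a)
    have hv : HasDerivAt (fun t : ℝ => 2 * (2*t+a) * (3-(2*t+a)) / 9)
        (((2*(2*1+0)) * (3-(2*t+a)) + (2 * (2*t+a)) * (0 - (2*1+0))) / 9) t :=
      ((hs.const_mul 2).mul ((hasDerivAt_const t (3:ℝ)).sub hs)).div_const 9
    have hd3 := hu.div hv hvne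
    have h := (hd1.add hd2).sub hd3
    refine h.congr_deriv ?_
    have hE' : 3 - (t * 2 + a) ≠ 0 := by rw [mul_comm]; exact hE
    field_simp
    ring
  have hanti : AntitoneOn f (Set.Icc x a) := by
    have hden : ∀ t ∈ Set.Icc x a, 2 * (2*t+a) * (3-(2*t+a)) / 9 ≠ 0 := by
      intro t ht
      have h1 : 0 < t := hx0.trans_le ht.1
      have h2 : t ≤ a := ht.2
      have h3 : 0 < 3-(2*t+a) := by nlinarith
      positivity
    apply antitoneOn_of_deriv_nonpos (convex_Icc x a)
    · have hc1 : ContinuousOn (fun t : ℝ => Real.log t) (Set.Icc x a) :=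
        Real.continuousOn_log.mono (fun t ht => (hx0.trans_le ht.1).ne')
      have hc2 : ContinuousOn (fun t : ℝ => Real.log (1 - t)) (Set.Icc x a) := by
        apply Real.continuousOn_log.comp (by fun_prop)
        intro t ht
        have h2 : t ≤ a := ht.2
        have h3 : (1:ℝ) - t ≠ 0 := by intro h; nlinarith
        simpa using h3
      exact ((continuousOn_const.mul (continuousOn_const.sub hc1)).add
        (continuousOn_const.mul (continuousOn_const.sub hc2))).sub
        (ContinuousOn.div (by fun_prop) (by fun_prop) hden)
    · rw [interior_Icc]
      exact fun t ht => (hderiv t ht).differentiableAt.differentiableWithinAt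
    · rw [interior_Icc]
      intro t ht
      rw [(hderiv t ht).deriv]
      have ht0 : 0 < t := hx0.trans ht.1
      have ht1 : t < 1 := ht.2.trans ha1
      have hta : t < a := ht.2
      have hs3 : 2*t+a < 3 := by nlinarith
      have hG : 0 ≤ (3-(2*t+a))^2-(3-2*(2*t+a))*(3*t) := by
        rcases le_or_gt (3-2*(2*t+a)) 0 with h | h
        · nlinarith [sq_nonneg (3-(2*t+a))]
        · nlinarith [sq_nonneg (2*t+a-3/2)]
      apply div_nonpos_of_nonpos_of_nonneg
      · apply neg_nonpos_of_nonneg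
        exact mul_nonneg (pow_nonneg (by linarith) 3) hG
      · exact mul_nonneg (mul_nonneg (mul_nonneg ht0.le (by linarith)) (sq_nonneg _))
          (sq_nonneg _)
  have hfa : f a = 0 := by simp [hf]
  have := hanti ⟨le_refl x, hxa.le⟩ ⟨hxa.le, le_refl a⟩ hxa.le
  rw [hfa] at this
  simp only [hf] at this
  linarith

private lemma chernoff_sum_aux (N k : ℕ) (x t : ℝ) (hx0 : 0 ≤ x) (hx1 : x ≤ 1) (ht : 1 ≤ t) :
    ∑ j ∈ Finset.Ico k (N+1), (N.choose j : ℝ) * x^j * (1-x)^(N-j)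
      ≤ (x*t + (1-x))^N / t^k := by
  have ht0 : (0:ℝ) < t := lt_of_lt_of_le one_pos ht
  rw [le_div_iff₀ (by positivity)]
  rw [Finset.sum_mul]
  have hx1' : (0:ℝ) ≤ 1 - x := by linarith
  have hxt : (0:ℝ) ≤ x*t := mul_nonneg hx0 ht0.le
  calc ∑ j ∈ Finset.Ico k (N+1), (N.choose j : ℝ) * x^j * (1-x)^(N-j) * t^k
      ≤ ∑ j ∈ Finset.Ico k (N+1), (x*t)^j * (1-x)^(N-j) * (N.choose j : ℝ) := by
        apply Finset.sum_le_sum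
        intro j hj
        have hkj : k ≤ j := (Finset.mem_Ico.mp hj).1
        have h1 : t^k ≤ t^j := pow_le_pow_right₀ ht hkj
        have h2 : (0:ℝ) ≤ (N.choose j : ℝ) * x^j * (1-x)^(N-j) :=
          mul_nonneg (mul_nonneg (Nat.cast_nonneg _) (pow_nonneg hx0 _)) (pow_nonneg hx1' _)
        calc (N.choose j : ℝ) * x^j * (1-x)^(N-j) * t^k
            ≤ (N.choose j : ℝ) * x^j * (1-x)^(N-j) * t^j := mul_le_mul_of_nonneg_left h1 h2
          _ = (x*t)^j * (1-x)^(N-j) * (N.choose j : ℝ) := by rw [mul_pow]; ring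
    _ ≤ ∑ j ∈ Finset.range (N+1), (x*t)^j * (1-x)^(N-j) * (N.choose j : ℝ) := by
        apply Finset.sum_le_sum_of_subset_of_nonneg
        · intro j hj
          simp only [Finset.mem_Ico, Finset.mem_range] at hj ⊢
          omega
        · intro j _ _
          exact mul_nonneg (mul_nonneg (pow_nonneg hxt _) (pow_nonneg hx1' _))
            (Nat.cast_nonneg _)
    _ = (x*t + (1-x))^N := (add_pow _ _ N).symm

/-- For `x ∈ (0, k/N)`, the binomial cdf at `k - 1` satisfies the Massart-type bound
`∑_{j=0}^{k-1} C(N,j) x^j (1-x)^(N-j) ≥ 1 - exp(-N(x - k/N)² / (2((2/3)x + k/(3N))(1 - (2/3)x - k/(3N))))`. -/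
theorem binomial_cdf_lower_bound
    (N : ℕ) (hN : 0 < N) (k : ℕ) (hk1 : 1 ≤ k) (hkN : k ≤ N)
    (x : ℝ) (hx : x ∈ Set.Ioo (0 : ℝ) ((k : ℝ) / N)) :
    1 - Real.exp (- (N * (x - (k : ℝ) / N) ^ 2) /
        (2 * (2 / 3 * x + k / (3 * N)) * (1 - 2 / 3 * x - k / (3 * N))))
    ≤ ∑ j ∈ Finset.range k, (N.choose j : ℝ) * x ^ j * (1 - x) ^ (N - j) := by
  obtain ⟨hx0, hxa⟩ := hx
  have hN0 : (0:ℝ) < N := Nat.cast_pos.mpr hN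
  set a : ℝ := (k:ℝ)/N with ha
  have hk0 : (0:ℝ) < k := Nat.cast_pos.mpr hk1
  have ha0 : 0 < a := div_pos hk0 hN0
  have ha1 : a ≤ 1 := by rw [ha, div_le_one hN0]; exact_mod_cast hkN
  have hx1 : x < 1 := hxa.trans_le ha1
  have hk3 : (k:ℝ)/(3*N) = a/3 := by rw [ha]; ring
  have hsum : (∑ j ∈ Finset.range (N+1), (N.choose j : ℝ) * x^j * (1-x)^(N-j)) = 1 := by
    calc ∑ j ∈ Finset.range (N+1), (N.choose j : ℝ) * x^j * (1-x)^(N-j)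
        = (x + (1-x))^N := by
          rw [add_pow]
          exact Finset.sum_congr rfl (fun j _ => by ring)
      _ = 1 := by norm_num
  have hsplit : (∑ j ∈ Finset.range k, (N.choose j : ℝ) * x^j * (1-x)^(N-j))
      + (∑ j ∈ Finset.Ico k (N+1), (N.choose j : ℝ) * x^j * (1-x)^(N-j)) = 1 := by
    rw [Finset.sum_range_add_sum_Ico _ (by omega), hsum]
  suffices h : (∑ j ∈ Finset.Ico k (N+1), (N.choose j : ℝ) * x^j * (1-x)^(N-j))
      ≤ Real.exp (- (N * (x - (k : ℝ) / N) ^ 2) /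
        (2 * (2 / 3 * x + k / (3 * N)) * (1 - 2 / 3 * x - k / (3 * N)))) by
    linarith
  rcases eq_or_lt_of_le hkN with rfl | hklt
  · -- k = N case, a = 1
    have haN : (k:ℝ)/(k:ℝ) = 1 := div_self hk0.ne'
    have ha1' : a = 1 := by rw [ha, haN]
    have hk3' : (k:ℝ)/(3*(k:ℝ)) = 1/3 := by rw [hk3, ha1']
    have hx1ne : (1:ℝ) - x ≠ 0 := by intro h; nlinarith
    have h2x1 : (0:ℝ) < 2*x+1 := by linarith
    have htail : (∑ j ∈ Finset.Ico k (k+1), (k.choose j : ℝ) * x^j * (1-x)^(k-j)) = x^k := by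
      rw [Nat.Ico_succ_singleton, Finset.sum_singleton]
      simp
    rw [htail, haN, hk3']
    have hxk : x^k = Real.exp ((k:ℝ) * Real.log x) := by
      rw [← Real.log_pow, Real.exp_log (pow_pos hx0 k)]
    rw [hxk, Real.exp_le_exp]
    have hA : -((k:ℝ)*(x-1)^2)/(2*(2/3*x+1/3)*(1-2/3*x-1/3))
        = (k:ℝ) * (-(9*(1-x)/(4*(2*x+1)))) := by
      have hd : 2*(2/3*x+1/3)*(1-2/3*x-1/3) = 4*(2*x+1)*(1-x)/9 := by ring
      rw [hd]
      field_simp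
      ring
    have hlb := log_bound_aux x hx0 hx1
    calc (k:ℝ) * Real.log x ≤ (k:ℝ) * (-(9*(1-x)/(4*(2*x+1)))) :=
          mul_le_mul_of_nonneg_left (by linarith) hk0.le
      _ = -((k:ℝ)*(x-1)^2)/(2*(2/3*x+1/3)*(1-2/3*x-1/3)) := hA.symm
  · -- k < N case, a < 1
    have ha1' : a < 1 := by rw [ha, div_lt_one hN0]; exact_mod_cast hklt
    have h1a : 0 < 1 - a := by linarith
    set t0 : ℝ := a*(1-x)/(x*(1-a)) with ht0def
    have hden : 0 < x*(1-a) := mul_pos hx0 h1a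
    have ht1 : 1 ≤ t0 := by
      rw [ht0def, le_div_iff₀ hden]
      nlinarith
    have ht0pos : 0 < t0 := lt_of_lt_of_le one_pos ht1
    refine (chernoff_sum_aux N k x t0 hx0.le hx1.le ht1).trans ?_
    have hxt : x*t0 + (1-x) = (1-x)/(1-a) := by
      rw [ht0def]
      field_simp
      ring
    rw [hxt]
    have hq : 0 < (1-x)/(1-a) := div_pos (by linarith) h1a
    have hLpos : 0 < ((1-x)/(1-a))^N / t0^k := div_pos (pow_pos hq N) (pow_pos ht0pos k)
    rw [← Real.exp_log hLpos, Real.exp_le_exp,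
      Real.log_div (pow_pos hq N).ne' (pow_pos ht0pos k).ne', Real.log_pow, Real.log_pow]
    have hlog1 : Real.log ((1-x)/(1-a)) = Real.log (1-x) - Real.log (1-a) :=
      Real.log_div (by linarith) h1a.ne'
    have hlogt : Real.log t0 = Real.log a + Real.log (1-x) - Real.log x - Real.log (1-a) := by
      rw [ht0def, Real.log_div (mul_pos ha0 (by linarith : (0:ℝ) < 1-x)).ne' hden.ne',
        Real.log_mul ha0.ne' (by linarith), Real.log_mul hx0.ne' h1a.ne']
      ring
    have hkNa : (k:ℝ) = (N:ℝ)*a := by rw [ha]; field_simp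
    have hkl := kl_ge_aux a x hx0 hxa ha1'
    have hdeq : 2*(2/3*x + (k:ℝ)/(3*(N:ℝ)))*(1 - 2/3*x - (k:ℝ)/(3*(N:ℝ)))
        = 2*(2*x+a)*(3-(2*x+a))/9 := by rw [hk3]; ring
    rw [← ha, hdeq, hlog1, hlogt, hkNa]
    have key : (N:ℝ)*(Real.log (1-x)-Real.log (1-a))
        - (N:ℝ)*a*(Real.log a + Real.log (1-x) - Real.log x - Real.log (1-a))
        = -((N:ℝ) * (a*(Real.log a - Real.log x) + (1-a)*(Real.log (1-a) - Real.log (1-x)))) := by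
      ring
    have hrhs : -((N:ℝ)*(x - a)^2)/(2*(2*x+a)*(3-(2*x+a))/9)
        = -((N:ℝ) * ((a-x)^2/(2*(2*x+a)*(3-(2*x+a))/9))) := by ring
    rw [key, hrhs]
    apply neg_le_neg
    exact mul_le_mul_of_nonneg_left hkl hN0.le
end

section
/- Let N be a positive integer, δ ∈ (0,1), and let k be an integer with 0 < k < N. Set θ = 9/(8 ln(2/δ)) and 𝒰(k) = k/N + (3/4)·(1 − 2k/N + √(1 + 4θk(1 − k/N)))/(1 + θN). Then k/N < 𝒰(k), and if moreover 𝒰(k) < 1, then exp(− N (𝒰(k) − k/N)² / (2 ((2/3)𝒰(k) + k/(3N)) (1 − (2/3)𝒰(k) − k/(3N)))) = δ/2. -/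
/-- `𝒰(k)` lies above `k/N`, and when `𝒰(k) < 1` it is a root of the Massart-bound
equation `exp(-N(x - k/N)²/(2((2/3)x + k/(3N))(1 - (2/3)x - k/(3N)))) = δ/2`. -/
theorem U_root_of_massart_equation
    (N : ℕ) (hN : 0 < N) (δ : ℝ) (hδ : δ ∈ Set.Ioo (0:ℝ) 1)
    (k : ℕ) (hk0 : 0 < k) (hkN : k < N)
    (θ : ℝ) (hθ : θ = 9 / (8 * Real.log (2 / δ)))
    (U : ℝ)
    (hU : U = (k : ℝ) / N +
      3 / 4 * ((1 - 2 * k / N + Real.sqrt (1 + 4 * θ * k * (1 - (k : ℝ) / N))) / (1 + θ * N))) :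
    (k : ℝ) / N < U ∧
      (U < 1 →
        Real.exp (- (N * (U - (k : ℝ) / N) ^ 2) /
          (2 * (2 / 3 * U + k / (3 * N)) * (1 - 2 / 3 * U - k / (3 * N)))) = δ / 2) := by
  obtain ⟨hδ0, hδ1⟩ := hδ
  have hN0 : (0:ℝ) < N := by exact_mod_cast hN
  have hk0' : (0:ℝ) < k := by exact_mod_cast hk0
  have hkN' : (k:ℝ) < N := by exact_mod_cast hkN
  set p : ℝ := (k : ℝ) / N with hp
  have hkNp : (k:ℝ) = N * p := by rw [hp]; field_simp
  have hp0 : 0 < p := div_pos hk0' hN0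
  have hp1 : p < 1 := (div_lt_one hN0).mpr hkN'
  have hL : 0 < Real.log (2/δ) := Real.log_pos (by rw [lt_div_iff₀ hδ0]; linarith)
  have hθ0 : 0 < θ := by rw [hθ]; positivity
  have hD : 0 < 1 + θ*N := by positivity
  have h1p : (0:ℝ) < 1 - p := by linarith
  have hpos : (0:ℝ) < θ*k*(1-p) := by positivity
  have harg : (0:ℝ) ≤ 1 + 4*θ*k*(1-p) := by nlinarith
  set S := Real.sqrt (1 + 4*θ*k*(1-p)) with hSdef
  have hS2 : S^2 = (1-2*p)^2 + 4*(1+θ*N)*p*(1-p) := by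
    rw [Real.sq_sqrt harg, hkNp]; ring
  have hS1 : (1:ℝ) ≤ S := by
    have h := Real.sqrt_le_sqrt (show (1:ℝ) ≤ 1 + 4*θ*k*(1-p) by nlinarith)
    rwa [Real.sqrt_one] at h
  have ht : U - p = 3/4*((1 - 2*p + S)/(1+θ*N)) := by
    rw [hU]; ring
  have ht0 : 0 < U - p := by
    rw [ht]
    have : 0 < 1 - 2*p + S := by nlinarith
    positivity
  refine ⟨by linarith, ?_⟩
  intro hU1
  have hAS : (U-p)*(1+θ*N) = 3/4*(1 - 2*p + S) := by
    rw [ht]; field_simp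
  have hkey : (1+θ*N)*(U-p)^2 = 3/2*(1-2*p)*(U-p) + 9/4*p*(1-p) := by
    have hkeyD : (1+θ*N)*((1+θ*N)*(U-p)^2) =
        (1+θ*N)*(3/2*(1-2*p)*(U-p) + 9/4*p*(1-p)) := by
      linear_combination ((U-p)*(1+θ*N) - 3/4*(1-2*p-S)) * hAS + 9/16 * hS2
    exact mul_left_cancel₀ (ne_of_gt hD) hkeyD
  have hLθ : θ * Real.log (2/δ) = 9/8 := by
    rw [hθ]; field_simp
  have hq0 : 0 < 2/3*U + p/3 := by linarith
  have hq1 : 2/3*U + p/3 < 1 := by linarith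
  have hE : 0 < 2 * (2/3*U + p/3) * (1 - 2/3*U - p/3) :=
    mul_pos (mul_pos two_pos hq0) (by linarith)
  have hmain : (N:ℝ)*(U-p)^2 =
      Real.log (2/δ) * (2 * (2/3*U + p/3) * (1 - 2/3*U - p/3)) := by
    have h2 : θ * ((N:ℝ)*(U-p)^2) =
        θ * (Real.log (2/δ) * (2 * (2/3*U + p/3) * (1 - 2/3*U - p/3))) := by
      linear_combination hkey - (2 * (2/3*U + p/3) * (1 - 2/3*U - p/3)) * hLθ
    exact mul_left_cancel₀ (ne_of_gt hθ0) h2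
  have h3 : (k:ℝ)/(3*N) = p/3 := by rw [hp]; ring
  rw [h3, hmain]
  rw [show -(Real.log (2/δ) * (2 * (2/3*U + p/3) * (1 - 2/3*U - p/3))) /
      (2 * (2/3*U + p/3) * (1 - 2/3*U - p/3)) = -Real.log (2/δ) from by
    rw [neg_div, mul_div_assoc, div_self (ne_of_gt hE), mul_one]]
  rw [show -Real.log (2/δ) = Real.log (δ/2) from by
    rw [Real.log_div (by norm_num) (ne_of_gt hδ0), Real.log_div (ne_of_gt hδ0) (by norm_num)]; ring]
  exact Real.exp_log (by linarith)
end

section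
/- Let N be a positive integer, δ ∈ (0,1), and let k be an integer with 0 < k < N. Set θ = 9/(8 ln(2/δ)) and ℒ(k) = k/N + (3/4)·(1 − 2k/N − √(1 + 4θk(1 − k/N)))/(1 + θN). Then ℒ(k) < k/N, and if moreover 0 < ℒ(k), then exp(− N (ℒ(k) − k/N)² / (2 ((2/3)ℒ(k) + k/(3N)) (1 − (2/3)ℒ(k) − k/(3N)))) = δ/2. -/
lemma key_massart (n p θ S L : ℝ) (hc : (1:ℝ) + θ*n ≠ 0)
    (hS2 : S^2 = 1 + 4*θ*n*p*(1-p))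
    (hL : L = p + 3/4*((1 - 2*p - S)/(1+θ*n))) :
    n*(L-p)^2*(8*θ) = 18*(p + 2/3*(L-p))*(1 - p - 2/3*(L-p)) := by
  have h1 : (L-p)*(4*(1+θ*n)) = 3*(1-2*p-S) := by
    subst hL; field_simp; ring
  have hSval : S = 1 - 2*p - 4/3*(1+θ*n)*(L-p) := by linarith
  have hS2' : (1 - 2*p - 4/3*(1+θ*n)*(L-p))^2 = 1 + 4*θ*n*p*(1-p) := by
    rw [← hSval]; exact hS2
  have h3 : (1+θ*n) * ((16/9)*(1+θ*n)*(L-p)^2 - (8/3)*(L-p)*(1-2*p) - 4*p*(1-p)) = 0 := by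
    linear_combination hS2'
  have h4 := (mul_eq_zero.mp h3).resolve_left hc
  linear_combination (9/2 : ℝ) * h4

/-- `ℒ(k)` lies below `k/N`, and when `0 < ℒ(k)` it is a root of the Massart-bound
equation `exp(-N(x - k/N)²/(2((2/3)x + k/(3N))(1 - (2/3)x - k/(3N)))) = δ/2`. -/
theorem L_root_of_massart_equation
    (N : ℕ) (hN : 0 < N) (δ : ℝ) (hδ : δ ∈ Set.Ioo (0:ℝ) 1)
    (k : ℕ) (hk0 : 0 < k) (hkN : k < N)
    (θ : ℝ) (hθ : θ = 9 / (8 * Real.log (2 / δ)))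
    (L : ℝ)
    (hL : L = (k : ℝ) / N +
      3 / 4 * ((1 - 2 * k / N - Real.sqrt (1 + 4 * θ * k * (1 - (k : ℝ) / N))) / (1 + θ * N))) :
    L < (k : ℝ) / N ∧
      (0 < L →
        Real.exp (- (N * (L - (k : ℝ) / N) ^ 2) /
          (2 * (2 / 3 * L + k / (3 * N)) * (1 - 2 / 3 * L - k / (3 * N)))) = δ / 2) := by
  obtain ⟨hδ0, hδ1⟩ := hδ
  have hN' : (0:ℝ) < N := by exact_mod_cast hN
  have hk' : (0:ℝ) < k := by exact_mod_cast hk0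
  have hkN' : (k:ℝ) < N := by exact_mod_cast hkN
  set p : ℝ := (k:ℝ)/N with hp
  have hp0 : 0 < p := div_pos hk' hN'
  have hp1 : p < 1 := (div_lt_one hN').mpr hkN'
  have hΛ : 0 < Real.log (2/δ) := Real.log_pos (by rw [lt_div_iff₀ hδ0]; linarith)
  have hθ0 : 0 < θ := by rw [hθ]; positivity
  have hc : (0:ℝ) < 1 + θ * N := by positivity
  set S := Real.sqrt (1 + 4*θ*k*(1 - (k:ℝ)/N)) with hS
  have harg : 0 < 4*θ*(k:ℝ)*(1 - (k:ℝ)/N) := by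
    have : (0:ℝ) < 1 - p := by linarith
    rw [hp] at this
    positivity
  have hS2 : S^2 = 1 + 4*θ*k*(1 - (k:ℝ)/N) := Real.sq_sqrt (by linarith)
  have hS1 : 1 < S := by
    rw [hS, show (1:ℝ) = Real.sqrt 1 from Real.sqrt_one.symm]
    exact Real.sqrt_lt_sqrt (by norm_num) (by rw [Real.sqrt_one]; linarith)
  -- first part
  have hLp : L - p = 3/4 * ((1 - 2*p - S)/(1 + θ*N)) := by
    rw [hL, hp]; ring
  have hneg : (1 - 2*p - S)/(1 + θ*N) < 0 :=
    div_neg_of_neg_of_pos (by linarith) hc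
  have hfirst : L < p := by nlinarith [hLp, hneg]
  refine ⟨hfirst, fun hL0 => ?_⟩
  -- second part
  have hkpn : (k:ℝ) = p * N := by rw [hp]; field_simp
  have hS2' : S^2 = 1 + 4*θ*(N:ℝ)*p*(1-p) := by
    rw [hS2, hp]; field_simp
  have hkey := key_massart (N:ℝ) p θ S L hc.ne' hS2' (by linarith [hLp])
  have hp3 : (k:ℝ)/(3*N) = p/3 := by rw [hp]; ring
  have ha0 : 0 < 2/3*L + p/3 := by linarith
  have ha1 : 2/3*L + p/3 < 1 := by linarith
  have hden : 0 < 2*(2/3*L + (k:ℝ)/(3*N))*(1 - 2/3*L - (k:ℝ)/(3*N)) := by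
    rw [hp3]; nlinarith
  have hδ2 : (0:ℝ) < δ/2 := by linarith
  rw [← Real.exp_log hδ2]
  congr 1
  have hlogval : Real.log (δ/2) = -(9/(8*θ)) := by
    have h1 : Real.log (δ/2) = -Real.log (2/δ) := by
      rw [← Real.log_inv, inv_div]
    rw [h1, hθ]
    field_simp
  have h8θ : (8:ℝ)*θ ≠ 0 := by positivity
  have hkey2 : (N:ℝ)*(L-p)^2 = 9 * (2*(2/3*L+p/3)*(1-2/3*L-p/3)) / (8*θ) := by
    rw [eq_div_iff h8θ]
    linear_combination hkey
  rw [hlogval, div_eq_iff hden.ne', hp3]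
  linear_combination -hkey2
end

section
/- Let N be a positive integer and δ ∈ (0,1). For each integer 0 ≤ k ≤ N define the Clopper–Pearson limits L(k) and U(k) by: L(0) = 0, and for k > 0, L(k) is the unique p̲ ∈ (0,1) with ∑_{j=0}^{k−1} C(N,j) p̲^j (1−p̲)^(N−j) = 1 − δ/2; U(N) = 1, and for k < N, U(k) is the unique p̄ ∈ (0,1) with ∑_{j=0}^{k} C(N,j) p̄^j (1−p̄)^(N−j) = δ/2. Then for every p ∈ (0,1), ∑_{k=0}^{N} [L(k) ≤ p and p ≤ U(k)] · C(N,k) p^k (1−p)^(N−k) > 1 − δ. -/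
private lemma cp_term_hasDerivAt (N j : ℕ) (x : ℝ) :
    HasDerivAt (fun p : ℝ => (N.choose j : ℝ) * p ^ j * (1 - p) ^ (N - j))
      ((N.choose j : ℝ) * ((j : ℝ) * x ^ (j-1) * (1-x)^(N-j)
        + x ^ j * (((N-j : ℕ) : ℝ) * (1-x)^(N-j-1) * (-1)))) x := by
  have h1 : HasDerivAt (fun p : ℝ => p ^ j) ((j:ℝ) * x ^ (j-1)) x := hasDerivAt_pow j x
  have h2 : HasDerivAt (fun p : ℝ => (1 - p) ^ (N-j)) (((N-j : ℕ):ℝ) * (1-x)^(N-j-1) * (-1)) x := by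
    simpa using ((hasDerivAt_id x).const_sub 1).fun_pow (N-j)
  have h := (h1.fun_mul h2).const_mul ((N.choose j : ℝ))
  have hfun : (fun p : ℝ => (N.choose j : ℝ) * (p ^ j * (1 - p) ^ (N - j)))
      = fun p => (N.choose j : ℝ) * p ^ j * (1 - p) ^ (N - j) := by funext q; ring
  rw [hfun] at h
  convert h using 1

private lemma cp_deriv_sum_eq (N : ℕ) (x : ℝ) : ∀ m, 1 ≤ m → m ≤ N →
    ∑ j ∈ Finset.range m, (N.choose j : ℝ) * ((j : ℝ) * x ^ (j-1) * (1-x)^(N-j)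
        + x ^ j * (((N-j : ℕ) : ℝ) * (1-x)^(N-j-1) * (-1)))
      = -((N:ℝ) * ((N-1).choose (m-1) : ℝ) * x^(m-1) * (1-x)^(N-m)) := by
  intro m
  induction m with
  | zero => omega
  | succ m ih =>
    intro _ hmN
    rcases Nat.eq_zero_or_pos m with hm0 | hm0
    · subst hm0; simp
    · rw [Finset.sum_range_succ, ih hm0 (by omega)]
      have h1 : N - 1 + 1 = N := by omega
      have h2 : m - 1 + 1 = m := by omega
      have hnat1 : N * ((N-1).choose (m-1)) = N.choose m * m := by
        have := Nat.add_one_mul_choose_eq (N-1) (m-1)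
        simpa [Nat.succ_eq_add_one, h1, h2] using this
      have hk1 : (N:ℝ) * ((N-1).choose (m-1) : ℝ) = (N.choose m : ℝ) * m := by
        exact_mod_cast hnat1
      have hnat2 : N * ((N-1).choose m) = N.choose m * (N - m) := by
        have ha := Nat.add_one_mul_choose_eq (N-1) m
        have hb := Nat.choose_succ_right_eq N m
        simp [Nat.succ_eq_add_one, h1] at ha
        omega
      have hk2 : (N:ℝ) * ((N-1).choose m : ℝ) = (N.choose m : ℝ) * ((N:ℝ) - m) := by
        have := congrArg (Nat.cast : ℕ → ℝ) hnat2
        push_cast [Nat.cast_sub (show m ≤ N by omega)] at this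
        linarith
      have hpow : (1-x)^(N-m) = (1-x)^(N-(m+1)) * (1-x) := by
        rw [← pow_succ]; congr 1; omega
      have hx : x^m = x^(m-1) * x := by
        rw [← pow_succ]; congr 1; omega
      have hc : ((N - m : ℕ) : ℝ) = (N:ℝ) - m := Nat.cast_sub (by omega)
      simp only [Nat.add_sub_cancel, Nat.sub_sub]
      rw [hpow, hx, hc]
      linear_combination (-(x^(m-1)*(1-x)^(N-(m+1)))*(1-x)) * hk1 + (x^(m-1)*x*(1-x)^(N-(m+1)))*hk2

private lemma cp_hasDerivAt (N m : ℕ) (hm1 : 1 ≤ m) (hmN : m ≤ N) (x : ℝ) :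
    HasDerivAt (fun p : ℝ => ∑ j ∈ Finset.range m, (N.choose j : ℝ) * p ^ j * (1-p)^(N-j))
      (-((N:ℝ) * ((N-1).choose (m-1) : ℝ) * x^(m-1) * (1-x)^(N-m))) x := by
  have h := HasDerivAt.fun_sum (fun j (_ : j ∈ Finset.range m) => cp_term_hasDerivAt N j x)
  rwa [cp_deriv_sum_eq N x m hm1 hmN] at h

private lemma cp_strictAntiOn (N m : ℕ) (hm1 : 1 ≤ m) (hmN : m ≤ N) :
    StrictAntiOn (fun p : ℝ => ∑ j ∈ Finset.range m, (N.choose j : ℝ) * p ^ j * (1-p)^(N-j))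
      (Set.Icc 0 1) := by
  apply strictAntiOn_of_deriv_neg (convex_Icc 0 1)
  · exact fun x _ => (cp_hasDerivAt N m hm1 hmN x).continuousAt.continuousWithinAt
  · intro x hx
    rw [interior_Icc] at hx
    rw [(cp_hasDerivAt N m hm1 hmN x).deriv]
    have h1 : (0:ℝ) < N := by exact_mod_cast (by omega : 0 < N)
    have h2 : (0:ℝ) < ((N-1).choose (m-1) : ℝ) := by
      exact_mod_cast Nat.choose_pos (by omega : m - 1 ≤ N - 1)
    have h3 : (0:ℝ) < x ^ (m-1) := pow_pos hx.1 _
    have h4 : (0:ℝ) < (1-x) ^ (N-m) := pow_pos (by linarith [hx.2]) _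
    have := mul_pos (mul_pos (mul_pos h1 h2) h3) h4
    linarith

/-- The Clopper–Pearson confidence interval `[L(K), U(K)]` has coverage probability
exceeding `1 - δ` for every `p ∈ (0,1)`. -/
theorem clopper_pearson_coverage
    (N : ℕ) (hN : 0 < N) (δ : ℝ) (hδ : δ ∈ Set.Ioo (0:ℝ) 1)
    (L U : ℕ → ℝ)
    (hL0 : L 0 = 0)
    (hL : ∀ k, 0 < k → k ≤ N → L k ∈ Set.Ioo (0:ℝ) 1 ∧
      ∑ j ∈ Finset.range k, (N.choose j : ℝ) * (L k) ^ j * (1 - L k) ^ (N - j) = 1 - δ / 2)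
    (hUN : U N = 1)
    (hU : ∀ k, k < N → U k ∈ Set.Ioo (0:ℝ) 1 ∧
      ∑ j ∈ Finset.range (k + 1), (N.choose j : ℝ) * (U k) ^ j * (1 - U k) ^ (N - j) = δ / 2)
    (p : ℝ) (hp : p ∈ Set.Ioo (0:ℝ) 1) :
    1 - δ < ∑ k ∈ Finset.range (N + 1),
      (if L k ≤ p ∧ p ≤ U k then (N.choose k : ℝ) * p ^ k * (1 - p) ^ (N - k) else 0) := by
  obtain ⟨hp0, hp1⟩ := hp
  obtain ⟨hδ0, hδ1⟩ := hδ
  set f : ℕ → ℝ := fun k => (N.choose k : ℝ) * p ^ k * (1-p)^(N-k) with hf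
  have hpmem : p ∈ Set.Icc (0:ℝ) 1 := ⟨le_of_lt hp0, le_of_lt hp1⟩
  have hfnn : ∀ k, 0 ≤ f k := fun k =>
    mul_nonneg (mul_nonneg (Nat.cast_nonneg _) (pow_nonneg (le_of_lt hp0) _))
      (pow_nonneg (by linarith) _)
  have htotal : ∑ k ∈ Finset.range (N+1), f k = 1 := by
    have h := add_pow p (1-p) N
    have h2 : ∑ k ∈ Finset.range (N+1), f k
        = ∑ k ∈ Finset.range (N+1), p ^ k * (1-p)^(N-k) * (N.choose k : ℝ) :=
      Finset.sum_congr rfl fun k _ => by rw [hf]; ring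
    rw [h2, ← h]
    norm_num
  -- upper tail (p below lower limits)
  set sA := (Finset.range (N+1)).filter (fun k => p < L k) with hsA
  have hA : ∑ k ∈ sA, f k < δ/2 := by
    rcases sA.eq_empty_or_nonempty with he | hne
    · rw [he]; simp; linarith
    · set k0 := sA.min' hne with hk0def
      have hk0 := sA.min'_mem hne
      rw [← hk0def, Finset.mem_filter, Finset.mem_range] at hk0
      have hpL : p < L k0 := hk0.2
      have hk0pos : 0 < k0 := by
        rcases Nat.eq_zero_or_pos k0 with h0 | h0
        · rw [h0, hL0] at hpL; linarith
        · exact h0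
      have hk0N : k0 ≤ N := by omega
      obtain ⟨hLmem, hLeq⟩ := hL k0 hk0pos hk0N
      have hsub : sA ⊆ Finset.Ico k0 (N+1) := by
        intro k hk
        have h1 := sA.min'_le k hk
        rw [Finset.mem_filter, Finset.mem_range] at hk
        exact Finset.mem_Ico.2 ⟨h1, hk.1⟩
      have h5 : ∑ k ∈ sA, f k ≤ ∑ k ∈ Finset.Ico k0 (N+1), f k :=
        Finset.sum_le_sum_of_subset_of_nonneg hsub (fun k _ _ => hfnn k)
      have hsplit : ∑ j ∈ Finset.range k0, f j + ∑ k ∈ Finset.Ico k0 (N+1), f k = 1 := by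
        rw [Finset.range_eq_Ico, Finset.sum_Ico_consecutive _ (Nat.zero_le _) (by omega),
          ← Finset.range_eq_Ico]
        exact htotal
      have hgt : 1 - δ/2 < ∑ j ∈ Finset.range k0, f j := by
        have h6 := cp_strictAntiOn N k0 hk0pos hk0N hpmem
          ⟨le_of_lt hLmem.1, le_of_lt hLmem.2⟩ hpL
        simp only [] at h6
        rw [hLeq] at h6
        exact h6
      linarith
  -- lower tail (p above upper limits)
  set sB := (Finset.range (N+1)).filter (fun k => U k < p) with hsB
  have hB : ∑ k ∈ sB, f k < δ/2 := by
    rcases sB.eq_empty_or_nonempty with he | hne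
    · rw [he]; simp; linarith
    · set k1 := sB.max' hne with hk1def
      have hk1 := sB.max'_mem hne
      rw [← hk1def, Finset.mem_filter, Finset.mem_range] at hk1
      have hUp : U k1 < p := hk1.2
      have hk1N : k1 < N := by
        rcases Nat.lt_or_ge k1 N with h0 | h0
        · exact h0
        · exfalso
          have : k1 = N := by omega
          rw [this, hUN] at hUp; linarith
      obtain ⟨hUmem, hUeq⟩ := hU k1 hk1N
      have hsub : sB ⊆ Finset.range (k1+1) := by
        intro k hk
        have h1 := sB.le_max' k hk
        exact Finset.mem_range.2 (by omega)
      have h5 : ∑ k ∈ sB, f k ≤ ∑ k ∈ Finset.range (k1+1), f k :=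
        Finset.sum_le_sum_of_subset_of_nonneg hsub (fun k _ _ => hfnn k)
      have hlt : ∑ j ∈ Finset.range (k1+1), f j < δ/2 := by
        have h6 := cp_strictAntiOn N (k1+1) (by omega) (by omega)
          ⟨le_of_lt hUmem.1, le_of_lt hUmem.2⟩ hpmem hUp
        simp only [] at h6
        rw [hUeq] at h6
        exact h6
      linarith
  -- assemble
  have hterm : ∀ k ∈ Finset.range (N+1),
      f k - (if p < L k then f k else 0) - (if U k < p then f k else 0)
        ≤ (if L k ≤ p ∧ p ≤ U k then f k else 0) := by
    intro k _
    by_cases h1 : p < L k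
    · have hcond : ¬(L k ≤ p ∧ p ≤ U k) := fun h => absurd h.1 (not_le.2 h1)
      rw [if_pos h1, if_neg hcond]
      have h7 : (0:ℝ) ≤ (if U k < p then f k else 0) := by
        split_ifs; exacts [hfnn k, le_refl 0]
      linarith
    · by_cases h2 : U k < p
      · have hcond : ¬(L k ≤ p ∧ p ≤ U k) := fun h => absurd h.2 (not_le.2 h2)
        rw [if_neg h1, if_pos h2, if_neg hcond]
        linarith
      · have hcond : L k ≤ p ∧ p ≤ U k := ⟨not_lt.1 h1, not_lt.1 h2⟩
        rw [if_neg h1, if_neg h2, if_pos hcond]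
        linarith
  have hmain := Finset.sum_le_sum hterm
  have hsum1 : ∑ k ∈ Finset.range (N+1), (if p < L k then f k else 0) = ∑ k ∈ sA, f k :=
    (Finset.sum_filter _ _).symm
  have hsum2 : ∑ k ∈ Finset.range (N+1), (if U k < p then f k else 0) = ∑ k ∈ sB, f k :=
    (Finset.sum_filter _ _).symm
  have hsplit : ∑ k ∈ Finset.range (N+1),
      (f k - (if p < L k then f k else 0) - (if U k < p then f k else 0))
      = 1 - ∑ k ∈ sA, f k - ∑ k ∈ sB, f k := by
    rw [Finset.sum_sub_distrib, Finset.sum_sub_distrib, htotal, hsum1, hsum2]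
  rw [hsplit] at hmain
  show 1 - δ < ∑ k ∈ Finset.range (N + 1), (if L k ≤ p ∧ p ≤ U k then f k else 0)
  linarith
end

section
/- Let N be a positive integer, p ∈ (0,1), and ε > 0 with ε ≠ 3(1 − p). If K is a Binomial(N,p) random variable, then Pr{K/N ≥ p + ε} ≤ exp(− N ε² / (2 (p + ε/3)(1 − p − ε/3))); in particular Massart's upper-tail bound remains valid for all ε > 0, not only for ε ∈ (0, 1 − p). -/
set_option maxHeartbeats 1000000

open Real Finset


lemma pade_log {t : ℝ} (ht : 1 ≤ t) : 2 * (t - 1) / (t + 1) ≤ Real.log t := by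
  set g : ℝ → ℝ := fun x => Real.log x - 2 * (x - 1) / (x + 1) with hg
  have key : ∀ x : ℝ, 0 < x → HasDerivAt g (1 / x - 4 / (x + 1) ^ 2) x := by
    intro x hx
    have h1 : HasDerivAt (fun y : ℝ => 2 * (y - 1)) 2 x := by
      simpa using ((hasDerivAt_id x).sub_const 1).const_mul 2
    have h2 : HasDerivAt (fun y : ℝ => y + 1) 1 x := (hasDerivAt_id x).add_const 1
    have hx1 : x + 1 ≠ 0 := by linarith
    have hdiv := h1.div h2 hx1
    have hlog := Real.hasDerivAt_log (ne_of_gt hx)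
    have := hlog.sub hdiv
    have e : 2 * (x + 1) - 2 * (x - 1) * 1 = 4 := by ring
    rw [e] at this
    rw [one_div]; exact this
  have mono : MonotoneOn g (Set.Ici 1) := by
    apply monotoneOn_of_deriv_nonneg (convex_Ici 1)
    · intro x hx
      exact (key x (by simp at hx; linarith)).continuousAt.continuousWithinAt
    · intro x hx
      simp only [interior_Ici, Set.mem_Ioi] at hx
      exact (key x (by linarith)).differentiableAt.differentiableWithinAt
    · intro x hx
      simp only [interior_Ici, Set.mem_Ioi] at hx
      rw [(key x (by linarith)).deriv]
      have h4 : 4 * x ≤ (x + 1) ^ 2 := by nlinarith [sq_nonneg (x - 1)]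
      have : 4 / (x + 1) ^ 2 ≤ 1 / x := by
        rw [div_le_div_iff₀ (by positivity) (by linarith)]
        linarith
      linarith
  have h01 : g 1 = 0 := by simp [hg]
  have := mono (Set.self_mem_Ici) ht ht
  rw [h01] at this
  simpa [hg, sub_nonneg] using this

lemma log_le_aux {p : ℝ} (hp : 0 < p) (hp1 : p ≤ 1) :
    Real.log p ≤ -(9 * (1 - p)) / (8 * p + 4) := by
  set f : ℝ → ℝ := fun x => -Real.log x - 9 * (1 - x) / (8 * x + 4) with hf
  have key : ∀ x : ℝ, 0 < x → HasDerivAt f (-(1 / x) - (-108 / (8 * x + 4) ^ 2)) x := by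
    intro x hx
    have hden : (8 : ℝ) * x + 4 ≠ 0 := by positivity
    have h1 : HasDerivAt (fun y : ℝ => 9 * (1 - y)) (-9) x := by
      simpa using ((hasDerivAt_id x).const_sub 1).const_mul 9
    have h2 : HasDerivAt (fun y : ℝ => 8 * y + 4) 8 x := by
      simpa using ((hasDerivAt_id x).const_mul 8).add_const 4
    have hdiv := h1.div h2 hden
    have hlog := (Real.hasDerivAt_log (ne_of_gt hx)).neg
    have := hlog.sub hdiv
    have e : -9 * (8 * x + 4) - 9 * (1 - x) * 8 = -108 := by ring
    rw [e] at this
    rw [one_div]; exact this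
  have anti : AntitoneOn f (Set.Ioc 0 1) := by
    apply antitoneOn_of_deriv_nonpos (convex_Ioc 0 1)
    · intro x hx
      exact (key x hx.1).continuousAt.continuousWithinAt
    · intro x hx
      rw [interior_Ioc] at hx
      exact (key x hx.1).differentiableAt.differentiableWithinAt
    · intro x hx
      rw [interior_Ioc] at hx
      obtain ⟨hx0, hx1⟩ := hx
      rw [(key x hx0).deriv]
      have h4 : 108 * x ≤ (8 * x + 4) ^ 2 := by nlinarith [sq_nonneg (32 * x - 11)]
      have : 108 / (8 * x + 4) ^ 2 ≤ 1 / x := by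
        rw [div_le_div_iff₀ (by positivity) (by positivity)]
        linarith
      have hrw : -(1 / x) - (-108 / (8 * x + 4) ^ 2) = 108 / (8 * x + 4) ^ 2 - 1 / x := by ring
      rw [hrw]; linarith
  have h1 : f 1 = 0 := by simp [hf]
  have := anti (Set.mem_Ioc.2 ⟨hp, hp1⟩) (Set.mem_Ioc.2 ⟨one_pos, le_refl 1⟩) hp1
  rw [h1] at this
  have : 9 * (1 - p) / (8 * p + 4) ≤ -Real.log p := by
    simp only [hf] at this; linarith
  have h2 : -(9 * (1 - p)) / (8 * p + 4) = -(9 * (1 - p) / (8 * p + 4)) := by ring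
  rw [h2]; linarith

lemma kl_ge_massart {p ε : ℝ} (hp : 0 < p) (hp1 : p < 1) (hε : 0 < ε) (hq : ε < 1 - p) :
    ε ^ 2 / (2 * (p + ε / 3) * (1 - p - ε / 3)) ≤
      (p + ε) * (Real.log (p + ε) - Real.log p)
        + (1 - p - ε) * (Real.log (1 - p - ε) - Real.log (1 - p)) := by
  set f : ℝ → ℝ := fun s =>
    (p + s) * (Real.log (p + s) - Real.log p)
      + (1 - p - s) * (Real.log (1 - p - s) - Real.log (1 - p))
      - s ^ 2 / (2 * (p + s / 3) * (1 - p - s / 3)) with hf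
  -- derivative formula
  set F' : ℝ → ℝ := fun s =>
    (1 * (Real.log (p + s) - Real.log p) + (p + s) * (1 / (p + s)))
      + ((-1) * (Real.log (1 - p - s) - Real.log (1 - p)) + (1 - p - s) * (-1 / (1 - p - s)))
      - (2 * s * (2 * (p + s / 3) * (1 - p - s / 3))
          - s ^ 2 * (2 * (1 / 3) * (1 - p - s / 3) + 2 * (p + s / 3) * (-(1 / 3))))
         / (2 * (p + s / 3) * (1 - p - s / 3)) ^ 2 with hF'
  have key : ∀ s : ℝ, 0 < p + s → 0 < 1 - p - s → HasDerivAt f (F' s) s := by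
    intro s h1 h2
    have hu : (0:ℝ) < p + s / 3 := by linarith
    have hv : (0:ℝ) < 1 - p - s / 3 := by linarith
    have hps : HasDerivAt (fun y : ℝ => p + y) 1 s := (hasDerivAt_id s).const_add p
    have hqs : HasDerivAt (fun y : ℝ => 1 - p - y) (-1) s := by
      simpa using (hasDerivAt_id s).const_sub (1 - p)
    have hlog1 : HasDerivAt (fun y : ℝ => Real.log (p + y) - Real.log p) (1 / (p + s)) s :=
      (hps.log (ne_of_gt h1)).sub_const _
    have hlog2 : HasDerivAt (fun y : ℝ => Real.log (1 - p - y) - Real.log (1 - p))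
        (-1 / (1 - p - s)) s := (hqs.log (ne_of_gt h2)).sub_const _
    have ht1 := hps.mul hlog1
    have ht2 := hqs.mul hlog2
    have hnum : HasDerivAt (fun y : ℝ => y ^ 2) (2 * s) s := by
      simpa using hasDerivAt_pow 2 s
    have hd1 : HasDerivAt (fun y : ℝ => 2 * (p + y / 3)) (2 * (1 / 3)) s := by
      simpa using ((hasDerivAt_id s).div_const 3 |>.const_add p).const_mul 2
    have hd2 : HasDerivAt (fun y : ℝ => 1 - p - y / 3) (-(1 / 3)) s := by
      simpa using ((hasDerivAt_id s).div_const 3).const_sub (1 - p)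
    have hden := hd1.mul hd2
    have hdenne : 2 * (p + s / 3) * (1 - p - s / 3) ≠ 0 := by positivity
    have hM := hnum.div hden hdenne
    have := (ht1.add ht2).sub hM
    convert this using 1
    all_goals rfl
  -- pointwise nonnegativity of F' on (0, 1-p)
  have hF'nonneg : ∀ s : ℝ, 0 < s → s < 1 - p → 0 ≤ F' s := by
    intro s hs0 hs1
    have h1 : (0:ℝ) < p + s := by linarith
    have h2 : (0:ℝ) < 1 - p - s := by linarith
    have hu : (0:ℝ) < p + s / 3 := by linarith
    have hv : (0:ℝ) < 1 - p - s / 3 := by linarith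
    -- log lower bounds via Pade
    have hb1 : 2 * s / (2 * p + s) ≤ Real.log (p + s) - Real.log p := by
      have ht : (1:ℝ) ≤ (p + s) / p := by
        rw [le_div_iff₀ hp]; linarith
      have := pade_log ht
      rw [Real.log_div (by linarith) (ne_of_gt hp)] at this
      calc 2 * s / (2 * p + s) = 2 * ((p + s) / p - 1) / ((p + s) / p + 1) := by
            rw [div_eq_div_iff (by linarith) (by positivity)]
            field_simp
            ring
        _ ≤ _ := this
    have hb2 : 2 * s / (2 * (1 - p) - s) ≤ Real.log (1 - p) - Real.log (1 - p - s) := by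
      have ht : (1:ℝ) ≤ (1 - p) / (1 - p - s) := by
        rw [le_div_iff₀ h2]; linarith
      have := pade_log ht
      rw [Real.log_div (by linarith) (ne_of_gt h2)] at this
      calc 2 * s / (2 * (1 - p) - s)
            = 2 * ((1 - p) / (1 - p - s) - 1) / ((1 - p) / (1 - p - s) + 1) := by
            rw [div_eq_div_iff (by linarith) (by positivity)]
            field_simp
            ring
        _ ≤ _ := this
    -- the algebraic bound on the M' part
    have halg : (2 * s * (2 * (p + s / 3) * (1 - p - s / 3))
          - s ^ 2 * (2 * (1 / 3) * (1 - p - s / 3) + 2 * (p + s / 3) * (-(1 / 3))))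
         / (2 * (p + s / 3) * (1 - p - s / 3)) ^ 2
        ≤ 2 * s / (2 * p + s) + 2 * s / (2 * (1 - p) - s) := by
      have d1 : (0:ℝ) < 2 * p + s := by linarith
      have d2 : (0:ℝ) < 2 * (1 - p) - s := by linarith
      rw [div_add_div _ _ (ne_of_gt d1) (ne_of_gt d2),
        div_le_div_iff₀ (by positivity) (mul_pos d1 d2)]
      have hident : (2 * s * (2 * (1 - p) - s) + (2 * p + s) * (2 * s))
            * (2 * (p + s / 3) * (1 - p - s / 3)) ^ 2
          - (2 * s * (2 * (p + s / 3) * (1 - p - s / 3))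
              - s ^ 2 * (2 * (1 / 3) * (1 - p - s / 3) + 2 * (p + s / 3) * (-(1 / 3))))
            * ((2 * p + s) * (2 * (1 - p) - s))
          = 16 * s * (s ^ 2 * (5 / 648 * s ^ 2 + 5 / 216 * (1 - p - s) * s
              + 1 / 216 * p * s
              + 1 / 36 * (p ^ 2 - p * (1 - p - s) + (1 - p - s) ^ 2))) := by
        ring
      nlinarith [hident, mul_pos hs0 (mul_pos hs0 hs0), sq_nonneg (p - (1 - p - s)),
        mul_pos hp h2, sq_nonneg s, mul_pos hs0 hs0,
        mul_nonneg (mul_nonneg hs0.le hs0.le) (mul_nonneg hp.le h2.le),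
        mul_nonneg (mul_nonneg (mul_nonneg hs0.le hs0.le) hs0.le) h2.le,
        mul_nonneg (mul_nonneg (mul_nonneg hs0.le hs0.le) hs0.le) hp.le,
        mul_nonneg (mul_nonneg hs0.le hs0.le) (sq_nonneg (p - (1 - p - s)))]
    have hc1 : (p + s) * (1 / (p + s)) = 1 := by field_simp
    have hc2 : (1 - p - s) * (-1 / (1 - p - s)) = -1 := by field_simp
    simp only [hF', hc1, hc2]
    linarith [hb1, hb2, halg]
  -- monotonicity
  have mono : MonotoneOn f (Set.Icc 0 ε) := by
    apply monotoneOn_of_deriv_nonneg (convex_Icc 0 ε)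
    · intro x hx
      obtain ⟨hx0, hx1⟩ := hx
      exact (key x (by linarith) (by linarith)).continuousAt.continuousWithinAt
    · intro x hx
      rw [interior_Icc] at hx
      obtain ⟨hx0, hx1⟩ := hx
      exact (key x (by linarith) (by linarith)).differentiableAt.differentiableWithinAt
    · intro x hx
      rw [interior_Icc] at hx
      obtain ⟨hx0, hx1⟩ := hx
      rw [(key x (by linarith) (by linarith)).deriv]
      exact hF'nonneg x hx0 (by linarith)
  have hf0 : f 0 = 0 := by simp [hf]
  have := mono (Set.mem_Icc.2 ⟨le_refl 0, le_of_lt hε⟩)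
    (Set.mem_Icc.2 ⟨le_of_lt hε, le_refl ε⟩) (le_of_lt hε)
  rw [hf0] at this
  simp only [hf] at this
  linarith

lemma chernoff_step {N : ℕ} {p ε : ℝ} (hp : 0 < p) (hp1 : p < 1) (hε : 0 < ε)
    (hlt : p + ε < 1) :
    ∑ k ∈ Finset.range (N + 1),
      (if (N : ℝ) * (p + ε) ≤ k then (N.choose k : ℝ) * p ^ k * (1 - p) ^ (N - k) else 0)
    ≤ Real.exp (-(N : ℝ) * ((p + ε) * (Real.log (p + ε) - Real.log p)
        + (1 - p - ε) * (Real.log (1 - p - ε) - Real.log (1 - p)))) := by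
  set a := p + ε with ha
  set b := 1 - (p + ε) with hb
  set q := 1 - p with hq
  have hb0 : 0 < b := by simp [hb]; linarith
  have hq0 : 0 < q := by simp [hq]; linarith
  have ha0 : 0 < a := by simp [ha]; linarith
  set lam := a * q / (b * p) with hlam
  have hlam1 : 1 ≤ lam := by
    rw [hlam, le_div_iff₀ (by positivity)]
    have : b < q := by simp [hb, hq]; linarith
    nlinarith
  have hlam0 : 0 < lam := by positivity
  set t := Real.log lam with ht
  have ht0 : 0 ≤ t := Real.log_nonneg hlam1
  have hexp_t : Real.exp t = lam := Real.exp_log hlam0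
  -- step 1: termwise bound
  have step1 : ∑ k ∈ Finset.range (N + 1),
      (if (N : ℝ) * a ≤ k then (N.choose k : ℝ) * p ^ k * q ^ (N - k) else 0)
      ≤ ∑ k ∈ Finset.range (N + 1),
        (N.choose k : ℝ) * p ^ k * q ^ (N - k) * Real.exp (t * (k - N * a)) := by
    apply Finset.sum_le_sum
    intro k _
    by_cases h : (N : ℝ) * a ≤ k
    · rw [if_pos h]
      have h1 : (1:ℝ) ≤ Real.exp (t * (k - N * a)) := by
        apply Real.one_le_exp
        have : (0:ℝ) ≤ (k : ℝ) - N * a := by linarith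
        positivity
      nlinarith [mul_nonneg (mul_nonneg (Nat.cast_nonneg (N.choose k)) (pow_nonneg hp.le k))
        (pow_nonneg hq0.le (N - k))]
    · rw [if_neg h]
      positivity
  -- step 2: rewrite each term and sum via binomial theorem
  have step2 : ∑ k ∈ Finset.range (N + 1),
        (N.choose k : ℝ) * p ^ k * q ^ (N - k) * Real.exp (t * (k - N * a))
      = Real.exp (-(t * N * a)) * (p * lam + q) ^ N := by
    rw [add_pow, Finset.mul_sum]
    apply Finset.sum_congr rfl
    intro k _
    have e1 : t * (k - N * a) = t * k + -(t * N * a) := by ring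
    rw [e1, Real.exp_add]
    have e2 : Real.exp (t * k) = lam ^ k := by
      rw [mul_comm, Real.exp_nat_mul, hexp_t]
    rw [e2, mul_pow]
    ring
  -- step 3: p * lam + q = q / b
  have step3 : p * lam + q = q / b := by
    rw [hlam]
    field_simp
    ring_nf
    linarith
  -- step 4: assemble
  have step4 : Real.exp (-(t * N * a)) * (q / b) ^ N
      = Real.exp (-(N : ℝ) * (a * (Real.log a - Real.log p)
          + b * (Real.log b - Real.log q))) := by
    have hqb : (0:ℝ) < q / b := by positivity
    have e1 : (q / b) ^ N = Real.exp ((N : ℝ) * Real.log (q / b)) := by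
      rw [Real.exp_nat_mul, Real.exp_log hqb]
    rw [e1, ← Real.exp_add]
    congr 1
    rw [ht, hlam, Real.log_div (by positivity) (by positivity),
      Real.log_mul (ne_of_gt ha0) (ne_of_gt hq0),
      Real.log_mul (ne_of_gt hb0) (ne_of_gt hp),
      Real.log_div (ne_of_gt hq0) (ne_of_gt hb0)]
    have : b = 1 - a := by rw [hb, ha]
    rw [this]
    ring
  calc ∑ k ∈ Finset.range (N + 1),
      (if (N : ℝ) * a ≤ k then (N.choose k : ℝ) * p ^ k * q ^ (N - k) else 0)
      ≤ ∑ k ∈ Finset.range (N + 1),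
        (N.choose k : ℝ) * p ^ k * q ^ (N - k) * Real.exp (t * (k - N * a)) := step1
    _ = Real.exp (-(t * N * a)) * (p * lam + q) ^ N := step2
    _ = Real.exp (-(t * N * a)) * (q / b) ^ N := by rw [step3]
    _ = Real.exp (-(N : ℝ) * (a * (Real.log a - Real.log p)
          + b * (Real.log b - Real.log q))) := step4
    _ = Real.exp (-(N : ℝ) * ((p + ε) * (Real.log (p + ε) - Real.log p)
        + (1 - p - ε) * (Real.log (1 - p - ε) - Real.log (1 - p)))) := by
      congr 2
      rw [ha, hb, hq]
      ring_nf

/-- Massart's upper-tail bound remains valid for all `ε > 0` (with `ε ≠ 3(1 - p)` so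
that the right-hand side is well defined), not only for `ε ∈ (0, 1 - p)`. -/
theorem massart_upper_tail_all_eps
    (N : ℕ) (hN : 0 < N) (p : ℝ) (hp : p ∈ Set.Ioo (0:ℝ) 1)
    (ε : ℝ) (hε : 0 < ε) (hε' : ε ≠ 3 * (1 - p)) :
    ∑ k ∈ Finset.range (N + 1),
      (if (N : ℝ) * (p + ε) ≤ k then (N.choose k : ℝ) * p ^ k * (1 - p) ^ (N - k) else 0)
    ≤ Real.exp (- (N * ε ^ 2) / (2 * (p + ε / 3) * (1 - p - ε / 3))) := by
  obtain ⟨hp0, hp1⟩ := hp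
  rcases lt_trichotomy ε (1 - p) with hcase | hcase | hcase
  · -- main case : ε < 1 - p
    have hlt : p + ε < 1 := by linarith
    have hu : (0:ℝ) < p + ε / 3 := by linarith
    have hv : (0:ℝ) < 1 - p - ε / 3 := by linarith
    calc ∑ k ∈ Finset.range (N + 1),
        (if (N : ℝ) * (p + ε) ≤ k then (N.choose k : ℝ) * p ^ k * (1 - p) ^ (N - k) else 0)
        ≤ Real.exp (-(N : ℝ) * ((p + ε) * (Real.log (p + ε) - Real.log p)
            + (1 - p - ε) * (Real.log (1 - p - ε) - Real.log (1 - p)))) :=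
          chernoff_step hp0 hp1 hε hlt
      _ ≤ Real.exp (- (N * ε ^ 2) / (2 * (p + ε / 3) * (1 - p - ε / 3))) := by
          rw [Real.exp_le_exp]
          have hkl := kl_ge_massart hp0 hp1 hε hcase
          have hrw : - ((N:ℝ) * ε ^ 2) / (2 * (p + ε / 3) * (1 - p - ε / 3))
              = -(N : ℝ) * (ε ^ 2 / (2 * (p + ε / 3) * (1 - p - ε / 3))) := by ring
          rw [hrw]
          have hN0 : (0:ℝ) ≤ (N : ℝ) := Nat.cast_nonneg N
          nlinarith [mul_le_mul_of_nonneg_left hkl hN0]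
  · -- boundary case : ε = 1 - p
    have hsum : ∑ k ∈ Finset.range (N + 1),
        (if (N : ℝ) * (p + ε) ≤ k then (N.choose k : ℝ) * p ^ k * (1 - p) ^ (N - k) else 0)
        = p ^ N := by
      rw [Finset.sum_eq_single_of_mem N (Finset.self_mem_range_succ N)]
      · have h1 : p + ε = 1 := by linarith
        have hc : (N : ℝ) * (p + ε) ≤ (N : ℝ) := by rw [h1, mul_one]
        rw [if_pos hc]
        simp
      · intro k hk hkne
        have hklt : k < N := lt_of_le_of_ne (Nat.lt_succ_iff.mp (Finset.mem_range.mp hk)) hkne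
        rw [if_neg]
        push_neg
        have : p + ε = 1 := by linarith
        rw [this, mul_one]
        exact_mod_cast hklt
    rw [hsum]
    have hlog := log_le_aux hp0 hp1.le
    have hpN : p ^ N = Real.exp ((N : ℝ) * Real.log p) := by
      rw [Real.exp_nat_mul, Real.exp_log hp0]
    rw [hpN, Real.exp_le_exp]
    have heq : - ((N:ℝ) * ε ^ 2) / (2 * (p + ε / 3) * (1 - p - ε / 3))
        = (N : ℝ) * (-(9 * (1 - p)) / (8 * p + 4)) := by
      rw [hcase]
      have h1 : (8:ℝ) * p + 4 ≠ 0 := by positivity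
      have h2 : (0:ℝ) < p + (1 - p) / 3 := by linarith
      have h3 : (0:ℝ) < 1 - p - (1 - p) / 3 := by linarith
      have h4 : 2 * (p + (1 - p) / 3) * (1 - p - (1 - p) / 3) ≠ 0 := by positivity
      have h5 : (N:ℝ) * (-(9 * (1 - p)) / (8 * p + 4))
          = (-((N:ℝ) * (9 * (1 - p)))) / (8 * p + 4) := by ring
      rw [h5, div_eq_div_iff h4 h1]
      ring
    rw [heq]
    have hN0 : (0:ℝ) ≤ (N : ℝ) := Nat.cast_nonneg N
    exact mul_le_mul_of_nonneg_left hlog hN0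
  · -- trivial case : ε > 1 - p, the sum is empty
    have hsum : ∑ k ∈ Finset.range (N + 1),
        (if (N : ℝ) * (p + ε) ≤ k then (N.choose k : ℝ) * p ^ k * (1 - p) ^ (N - k) else 0)
        = 0 := by
      apply Finset.sum_eq_zero
      intro k hk
      rw [if_neg]
      push_neg
      have hkN : (k : ℝ) ≤ N := by exact_mod_cast Nat.lt_succ_iff.mp (Finset.mem_range.mp hk)
      have hN1 : (1:ℝ) ≤ (N : ℝ) := by exact_mod_cast hN
      have h1 : (1:ℝ) < p + ε := by linarith
      nlinarith
    rw [hsum]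
    exact (Real.exp_pos _).le
end
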